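/- arXiv:1810.12970 — 6 statements merged into one kernel-verified Lean document; each statement's English description precedes it below -/
import Mathlib

section
/- Let E and F be Banach spaces over 𝕜 (= ℝ or ℂ), let m, n, k ≥ 1 be natural numbers and let P ∈ 𝒫(^mE;F). Then for every q ∈ 𝒫(^kF) the map x ↦ (q(P(x)))^n belongs to 𝒫(^{mnk}E), and the map Δ_k^n P : 𝒫(^kF) → 𝒫(^{mnk}E) defined by (Δ_k^n P)(q)(x) = (q(P(x)))^n is a continuous n-homogeneous polynomial, i.e. Δ_k^n P ∈ 𝒫(^n 𝒫(^kF); 𝒫(^{mnk}E)). -/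
open scoped NNReal ENNReal

/-- `P : E → F` is a continuous `m`-homogeneous polynomial: it is generated by a
continuous `m`-linear map. -/
def IsHomPoly (𝕜 : Type*) [RCLike 𝕜] (m : ℕ) {E F : Type*}
    [NormedAddCommGroup E] [NormedSpace 𝕜 E] [NormedAddCommGroup F] [NormedSpace 𝕜 F]
    (P : E → F) : Prop :=
  ∃ A : ContinuousMultilinearMap 𝕜 (fun _ : Fin m => E) F, ∀ x, P x = A (fun _ => x)

/-- The sup norm over the closed unit ball. -/
noncomputable def polyNorm {E F : Type*} [Norm E] [Norm F] (P : E → F) : ℝ :=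
  sSup ((fun x => ‖P x‖) '' {x : E | ‖x‖ ≤ 1})

/-- The space `𝒫(^m E; F)` of continuous `m`-homogeneous polynomials. -/
structure HPoly (𝕜 : Type*) [RCLike 𝕜] (m : ℕ) (E F : Type*)
    [NormedAddCommGroup E] [NormedSpace 𝕜 E] [NormedAddCommGroup F] [NormedSpace 𝕜 F] where
  toFun : E → F
  isPoly' : IsHomPoly 𝕜 m toFun

namespace HPoly

variable {𝕜 : Type*} [RCLike 𝕜] {m : ℕ} {E F : Type*}
  [NormedAddCommGroup E] [NormedSpace 𝕜 E] [NormedAddCommGroup F] [NormedSpace 𝕜 F]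

instance : FunLike (HPoly 𝕜 m E F) E F where
  coe P := P.toFun
  coe_injective := by rintro ⟨f, hf⟩ ⟨g, hg⟩ h; simpa using h

@[ext] theorem ext {P Q : HPoly 𝕜 m E F} (h : ∀ x, P x = Q x) : P = Q := DFunLike.ext _ _ h

theorem isPoly (P : HPoly 𝕜 m E F) : IsHomPoly 𝕜 m ⇑P := P.isPoly'

instance : Zero (HPoly 𝕜 m E F) := ⟨⟨fun _ => 0, ⟨0, by simp⟩⟩⟩

@[simp] theorem zero_apply (x : E) : (0 : HPoly 𝕜 m E F) x = 0 := rfl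

instance : Add (HPoly 𝕜 m E F) :=
  ⟨fun P Q => ⟨fun x => P x + Q x, by
    obtain ⟨A, hA⟩ := P.isPoly'
    obtain ⟨B, hB⟩ := Q.isPoly'
    refine ⟨A + B, fun x => ?_⟩
    show P.toFun x + Q.toFun x = (A + B) fun _ => x
    rw [ContinuousMultilinearMap.add_apply, hA x, hB x]⟩⟩

@[simp] theorem add_apply (P Q : HPoly 𝕜 m E F) (x : E) : (P + Q) x = P x + Q x := rfl

instance : Neg (HPoly 𝕜 m E F) :=
  ⟨fun P => ⟨fun x => -P x, by
    obtain ⟨A, hA⟩ := P.isPoly'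
    refine ⟨-A, fun x => ?_⟩
    show -P.toFun x = (-A) fun _ => x
    rw [ContinuousMultilinearMap.neg_apply, hA x]⟩⟩

@[simp] theorem neg_apply (P : HPoly 𝕜 m E F) (x : E) : (-P) x = -P x := rfl

instance : SMul 𝕜 (HPoly 𝕜 m E F) :=
  ⟨fun c P => ⟨fun x => c • P x, by
    obtain ⟨A, hA⟩ := P.isPoly'
    refine ⟨c • A, fun x => ?_⟩
    show c • P.toFun x = (c • A) fun _ => x
    rw [ContinuousMultilinearMap.smul_apply, hA x]⟩⟩

@[simp] theorem smul_apply (c : 𝕜) (P : HPoly 𝕜 m E F) (x : E) : (c • P) x = c • P x := rfl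

instance : AddCommGroup (HPoly 𝕜 m E F) where
  add_assoc P Q R := by ext x; simp [add_assoc]
  zero_add P := by ext x; simp
  add_zero P := by ext x; simp
  add_comm P Q := by ext x; simp [add_comm]
  neg_add_cancel P := by ext x; simp
  nsmul := nsmulRec
  zsmul := zsmulRec

instance : Module 𝕜 (HPoly 𝕜 m E F) where
  one_smul P := by ext x; simp
  mul_smul a b P := by ext x; simp [mul_smul]
  smul_zero a := by ext x; simp
  smul_add a P Q := by ext x; simp
  add_smul a b P := by ext x; simp [add_smul]
  zero_smul P := by ext x; simp

theorem bddAbove_image (P : HPoly 𝕜 m E F) :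
    BddAbove ((fun x => ‖P x‖) '' {x : E | ‖x‖ ≤ 1}) := by
  obtain ⟨A, hA⟩ := P.isPoly'
  refine ⟨‖A‖, ?_⟩
  rintro r ⟨x, hx, rfl⟩
  show ‖P.toFun x‖ ≤ ‖A‖
  rw [hA x]
  calc ‖A fun _ => x‖ ≤ ‖A‖ * ∏ _i : Fin m, ‖x‖ := A.le_opNorm _
    _ ≤ ‖A‖ * 1 := by
        refine mul_le_mul_of_nonneg_left ?_ (norm_nonneg A)
        rw [Finset.prod_const]
        exact pow_le_one₀ (norm_nonneg x) hx
    _ = ‖A‖ := mul_one _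

theorem polyNorm_coe_nonneg (P : HPoly 𝕜 m E F) : 0 ≤ polyNorm ⇑P :=
  le_trans (norm_nonneg (P 0)) (le_csSup (bddAbove_image P) ⟨0, by simp, rfl⟩)

noncomputable instance : NormedAddCommGroup (HPoly 𝕜 m E F) :=
  AddGroupNorm.toNormedAddCommGroup
    { toFun := fun P => polyNorm (⇑P)
      map_zero' := by
        simp only [polyNorm]
        have h : (fun x : E => ‖(0 : HPoly 𝕜 m E F) x‖) '' {x : E | ‖x‖ ≤ 1} = {0} := by
          apply Set.eq_singleton_iff_nonempty_unique_mem.2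
          constructor
          · exact ⟨0, ⟨0, by simp, by simp⟩⟩
          · rintro r ⟨x, -, rfl⟩; simp
        rw [h, csSup_singleton]
      add_le' := fun P Q => by
        apply Real.sSup_le
        · rintro r ⟨x, hx, rfl⟩
          calc ‖(P + Q) x‖ ≤ ‖P x‖ + ‖Q x‖ := norm_add_le _ _
            _ ≤ polyNorm ⇑P + polyNorm ⇑Q :=
                add_le_add (le_csSup (bddAbove_image P) ⟨x, hx, rfl⟩)
                  (le_csSup (bddAbove_image Q) ⟨x, hx, rfl⟩)
        · exact add_nonneg (polyNorm_coe_nonneg P) (polyNorm_coe_nonneg Q)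
      neg' := fun P => by simp [polyNorm]
      eq_zero_of_map_eq_zero' := fun P h => by
        have h' : polyNorm ⇑P = 0 := h
        have hball : ∀ x : E, ‖x‖ ≤ 1 → P x = 0 := by
          intro x hx
          have h1 : ‖P x‖ ≤ polyNorm ⇑P := le_csSup (bddAbove_image P) ⟨x, hx, rfl⟩
          rw [h'] at h1
          exact norm_le_zero_iff.1 h1
        ext x
        rcases eq_or_ne x 0 with rfl | hx
        · simpa using hball 0 (by simp)
        · obtain ⟨A, hA⟩ := P.isPoly'
          set c : 𝕜 := ((‖x‖ : ℝ) : 𝕜) with hcdef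
          have hc : c ≠ 0 := by
            simp only [hcdef, ne_eq, RCLike.ofReal_eq_zero]
            exact norm_ne_zero_iff.2 hx
          have hu : ‖(c⁻¹ • x : E)‖ ≤ 1 := by
            rw [norm_smul, norm_inv, hcdef, RCLike.norm_ofReal,
              abs_of_nonneg (norm_nonneg x),
              inv_mul_cancel₀ (norm_ne_zero_iff.2 hx)]
          have h0 : P (c⁻¹ • x) = 0 := hball _ hu
          have key : P x = c ^ m • P (c⁻¹ • x) := by
            show P.toFun x = c ^ m • P.toFun (c⁻¹ • x)
            rw [hA x, hA (c⁻¹ • x)]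
            have h2 := A.map_smul_univ (fun _ : Fin m => c) (fun _ : Fin m => c⁻¹ • x)
            rw [Finset.prod_const] at h2
            have h3 : (fun _ : Fin m => c • c⁻¹ • x) = fun _ : Fin m => x := by
              funext i
              rw [smul_smul, mul_inv_cancel₀ hc, one_smul]
            rw [h3] at h2
            simpa using h2
          rw [key, h0, smul_zero]
          simp }

theorem norm_def (P : HPoly 𝕜 m E F) : ‖P‖ = polyNorm ⇑P := rfl

noncomputable instance : NormedSpace 𝕜 (HPoly 𝕜 m E F) :=
  { (inferInstance : Module 𝕜 (HPoly 𝕜 m E F)) with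
    norm_smul_le := fun c P => by
      show polyNorm ⇑(c • P) ≤ ‖c‖ * polyNorm ⇑P
      apply Real.sSup_le
      · rintro r ⟨x, hx, rfl⟩
        show ‖(c • P) x‖ ≤ _
        rw [smul_apply, norm_smul]
        exact mul_le_mul_of_nonneg_left
          (le_csSup (bddAbove_image P) ⟨x, hx, rfl⟩) (norm_nonneg c)
      · exact mul_nonneg (norm_nonneg c) (polyNorm_coe_nonneg P) }

end HPoly

section Aux

variable {𝕜 : Type*} [RCLike 𝕜] {E G H : Type*}
  [NormedAddCommGroup E] [NormedSpace 𝕜 E] [NormedAddCommGroup G] [NormedSpace 𝕜 G]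
  [NormedAddCommGroup H] [NormedSpace 𝕜 H]

theorem comp_update_key {ι κ : Type*} [Fintype ι] [Fintype κ] [DecidableEq ι] [DecidableEq κ]
    [DecidableEq (ι × κ)]
    (g : ι → ContinuousMultilinearMap 𝕜 (fun _ : κ => E) G)
    (x : ι × κ → E) (i₀ : ι) (j₀ : κ) (v : E) :
    (fun i => g i fun j => Function.update x (i₀, j₀) v (i, j)) =
      Function.update (fun i => g i fun j => x (i, j)) i₀
        (g i₀ (Function.update (fun j => x (i₀, j)) j₀ v)) := by
  funext i
  rcases eq_or_ne i i₀ with rfl | hi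
  · rw [Function.update_self]
    congr 1
    funext j
    rcases eq_or_ne j j₀ with rfl | hj
    · rw [Function.update_self, Function.update_self]
    · rw [Function.update_of_ne hj, Function.update_of_ne (by simp [hj])]
  · rw [Function.update_of_ne hi]
    congr 1
    funext j
    rw [Function.update_of_ne (by simp [hi])]

/-- Composition of a continuous multilinear map with a family of continuous multilinear
maps, each one filling a block of variables. -/
noncomputable def compFamily {ι κ : Type*} [Fintype ι] [Fintype κ] [DecidableEq ι]
    [DecidableEq κ]
    (T : ContinuousMultilinearMap 𝕜 (fun _ : ι => G) H)
    (g : ι → ContinuousMultilinearMap 𝕜 (fun _ : κ => E) G) :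
    ContinuousMultilinearMap 𝕜 (fun _ : ι × κ => E) H :=
  MultilinearMap.mkContinuous
    { toFun := fun x => T fun i => g i fun j => x (i, j)
      map_update_add' := by
        intro inst x p a b
        obtain ⟨i₀, j₀⟩ := p
        rw [comp_update_key, comp_update_key, comp_update_key, (g i₀).map_update_add,
          T.map_update_add]
      map_update_smul' := by
        intro inst x p c a
        obtain ⟨i₀, j₀⟩ := p
        rw [comp_update_key, comp_update_key, (g i₀).map_update_smul, T.map_update_smul] }
    (‖T‖ * ∏ i, ‖g i‖)
    (fun x => by
      calc ‖T fun i => g i fun j => x (i, j)‖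
          ≤ ‖T‖ * ∏ i, ‖g i fun j => x (i, j)‖ := T.le_opNorm _
        _ ≤ ‖T‖ * ∏ i, (‖g i‖ * ∏ j, ‖x (i, j)‖) := by
            refine mul_le_mul_of_nonneg_left
              (Finset.prod_le_prod (fun i _ => norm_nonneg _)
                (fun i _ => (g i).le_opNorm _)) (norm_nonneg T)
        _ = (‖T‖ * ∏ i, ‖g i‖) * ∏ p : ι × κ, ‖x p‖ := by
            rw [Fintype.prod_prod_type, Finset.prod_mul_distrib]
            ring)

@[simp] theorem compFamily_apply {ι κ : Type*} [Fintype ι] [Fintype κ] [DecidableEq ι]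
    [DecidableEq κ]
    (T : ContinuousMultilinearMap 𝕜 (fun _ : ι => G) H)
    (g : ι → ContinuousMultilinearMap 𝕜 (fun _ : κ => E) G) (x : ι × κ → E) :
    compFamily T g x = T fun i => g i fun j => x (i, j) := rfl

/-- Scaling bound: an `k`-homogeneous polynomial satisfies `‖q y‖ ≤ ‖q‖ * ‖y‖ ^ k`. -/
theorem HPoly.norm_apply_le {k : ℕ} (hk : 1 ≤ k) (q : HPoly 𝕜 k G H) (y : G) :
    ‖q y‖ ≤ ‖q‖ * ‖y‖ ^ k := by
  obtain ⟨B, hB⟩ := q.isPoly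
  rcases eq_or_ne y 0 with rfl | hy
  · have h0 : q (0 : G) = 0 := by
      rw [hB]
      exact B.map_coord_zero (⟨0, hk⟩ : Fin k) rfl
    rw [h0, norm_zero, norm_zero, zero_pow (by omega : k ≠ 0), mul_zero]
  · set c : 𝕜 := ((‖y‖ : ℝ) : 𝕜) with hcdef
    have hc : ‖c‖ = ‖y‖ := by
      rw [hcdef, RCLike.norm_ofReal, abs_of_nonneg (norm_nonneg y)]
    have hcne : c ≠ 0 := by
      simp only [hcdef, ne_eq, RCLike.ofReal_eq_zero]
      exact norm_ne_zero_iff.2 hy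
    have hu : ‖(c⁻¹ • y : G)‖ ≤ 1 := by
      rw [norm_smul, norm_inv, hc, inv_mul_cancel₀ (norm_ne_zero_iff.2 hy)]
    have hqu : ‖q (c⁻¹ • y)‖ ≤ ‖q‖ :=
      le_csSup q.bddAbove_image ⟨c⁻¹ • y, hu, rfl⟩
    have key : q y = c ^ k • q (c⁻¹ • y) := by
      rw [hB, hB]
      have h2 := B.map_smul_univ (fun _ : Fin k => c) (fun _ : Fin k => c⁻¹ • y)
      rw [Finset.prod_const] at h2
      have h3 : (fun _ : Fin k => c • c⁻¹ • y) = fun _ => y := by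
        funext i
        rw [smul_smul, mul_inv_cancel₀ hcne, one_smul]
      rw [h3] at h2
      simpa using h2
    calc ‖q y‖ = ‖c‖ ^ k * ‖q (c⁻¹ • y)‖ := by rw [key, norm_smul, norm_pow]
      _ ≤ ‖c‖ ^ k * ‖q‖ := mul_le_mul_of_nonneg_left hqu (pow_nonneg (norm_nonneg c) k)
      _ = ‖q‖ * ‖y‖ ^ k := by rw [hc]; ring

/-- The product of compositions of homogeneous polynomials with a homogeneous polynomial
is a homogeneous polynomial of the product degree. -/
theorem isHomPoly_prod_comp {F : Type*} [NormedAddCommGroup F] [NormedSpace 𝕜 F]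
    {m n k : ℕ} (P : E → F)
    (A : ContinuousMultilinearMap 𝕜 (fun _ : Fin m => E) F) (hA : ∀ x, P x = A fun _ => x)
    (q : Fin n → F → 𝕜)
    (B : Fin n → ContinuousMultilinearMap 𝕜 (fun _ : Fin k => F) 𝕜)
    (hB : ∀ i y, q i y = B i fun _ => y) :
    IsHomPoly 𝕜 (m * n * k) fun x => ∏ i, q i (P x) := by
  classical
  set C : Fin n → ContinuousMultilinearMap 𝕜 (fun _ : Fin k × Fin m => E) 𝕜 :=
    fun i => compFamily (B i) (fun _ => A) with hC
  set full : ContinuousMultilinearMap 𝕜 (fun _ : Fin n × (Fin k × Fin m) => E) 𝕜 :=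
    compFamily (ContinuousMultilinearMap.mkPiAlgebra 𝕜 (Fin n) 𝕜) C with hfull
  have e : (Fin n × (Fin k × Fin m)) ≃ Fin (m * n * k) :=
    Fintype.equivFinOfCardEq (by simp [Fintype.card_prod]; ring)
  refine ⟨full.domDomCongr e, fun x => ?_⟩
  have h1 : (full.domDomCongr e) (fun _ => x) = full fun _ => x := rfl
  rw [h1, hfull, compFamily_apply, ContinuousMultilinearMap.mkPiAlgebra_apply]
  refine Finset.prod_congr rfl fun i _ => ?_
  rw [hC]
  show q i (P x) = compFamily (B i) (fun _ => A) fun _ => x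
  rw [compFamily_apply, hB, hA]

end Aux

/-- For Banach spaces `E, F` over `𝕜 = ℝ` or `ℂ`, `m, n, k ≥ 1` and
`P ∈ 𝒫(^mE;F)`: for every `q ∈ 𝒫(^kF)` the map `x ↦ (q (P x))^n` belongs to `𝒫(^{mnk}E)`,
and the generalized adjoint `Δₖⁿ P : 𝒫(^kF) → 𝒫(^{mnk}E)`, `(Δₖⁿ P) q x = (q (P x))^n`,
is a continuous `n`-homogeneous polynomial. -/
theorem statement0 (𝕜 : Type*) [RCLike 𝕜] (E F : Type*)
    [NormedAddCommGroup E] [NormedSpace 𝕜 E] [CompleteSpace E]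
    [NormedAddCommGroup F] [NormedSpace 𝕜 F] [CompleteSpace F]
    (m n k : ℕ) (hm : 1 ≤ m) (hn : 1 ≤ n) (hk : 1 ≤ k)
    (P : E → F) (hP : IsHomPoly 𝕜 m P) :
    (∀ q : F → 𝕜, IsHomPoly 𝕜 k q → IsHomPoly 𝕜 (m * n * k) fun x => q (P x) ^ n) ∧
    ∃ D : HPoly 𝕜 k F 𝕜 → HPoly 𝕜 (m * n * k) E 𝕜,
      (∀ (q : HPoly 𝕜 k F 𝕜) (x : E), D q x = q (P x) ^ n) ∧
      IsHomPoly 𝕜 n D := by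
  classical
  obtain ⟨A, hA⟩ := hP
  have part1 : ∀ q : F → 𝕜, IsHomPoly 𝕜 k q →
      IsHomPoly 𝕜 (m * n * k) fun x => q (P x) ^ n := by
    intro q hq
    obtain ⟨B, hB⟩ := hq
    have h := isHomPoly_prod_comp (n := n) P A hA (fun _ => q) (fun _ => B) (fun _ => hB)
    simpa [Finset.prod_const] using h
  refine ⟨part1, ?_⟩
  -- the underlying multilinear map of the adjoint
  have hPx : ∀ x : E, ‖x‖ ≤ 1 → ‖P x‖ ≤ ‖A‖ := by
    intro x hx
    rw [hA]
    calc ‖A fun _ => x‖ ≤ ‖A‖ * ∏ _i : Fin m, ‖x‖ := A.le_opNorm _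
      _ ≤ ‖A‖ * 1 := by
          refine mul_le_mul_of_nonneg_left ?_ (norm_nonneg A)
          rw [Finset.prod_const]
          exact pow_le_one₀ (norm_nonneg x) hx
      _ = ‖A‖ := mul_one _
  set Draw : MultilinearMap 𝕜 (fun _ : Fin n => HPoly 𝕜 k F 𝕜) (HPoly 𝕜 (m * n * k) E 𝕜) :=
    { toFun := fun q =>
        ⟨fun x => ∏ i, (q i) (P x),
          isHomPoly_prod_comp P A hA (fun i => ⇑(q i))
            (fun i => Classical.choose (q i).isPoly)
            (fun i => Classical.choose_spec (q i).isPoly)⟩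
      map_update_add' := by
        intro inst q i₀ a b
        ext x
        show (∏ i, (Function.update q i₀ (a + b) i) (P x)) =
          (∏ i, (Function.update q i₀ a i) (P x)) + ∏ i, (Function.update q i₀ b i) (P x)
        have key : ∀ c : HPoly 𝕜 k F 𝕜,
            (fun i => (Function.update q i₀ c i) (P x)) =
              Function.update (fun i => (q i) (P x)) i₀ (c (P x)) := by
          intro c
          funext i
          rcases eq_or_ne i i₀ with rfl | hi
          · rw [Function.update_self, Function.update_self]
          · rw [Function.update_of_ne hi, Function.update_of_ne hi]
        rw [key, key, key, Finset.prod_update_of_mem (Finset.mem_univ i₀),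
          Finset.prod_update_of_mem (Finset.mem_univ i₀),
          Finset.prod_update_of_mem (Finset.mem_univ i₀),
          HPoly.add_apply, add_mul]
      map_update_smul' := by
        intro inst q i₀ c a
        ext x
        show (∏ i, (Function.update q i₀ (c • a) i) (P x)) =
          c • ∏ i, (Function.update q i₀ a i) (P x)
        have key : ∀ d : HPoly 𝕜 k F 𝕜,
            (fun i => (Function.update q i₀ d i) (P x)) =
              Function.update (fun i => (q i) (P x)) i₀ (d (P x)) := by
          intro d
          funext i
          rcases eq_or_ne i i₀ with rfl | hi
          · rw [Function.update_self, Function.update_self]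
          · rw [Function.update_of_ne hi, Function.update_of_ne hi]
        rw [key, key, Finset.prod_update_of_mem (Finset.mem_univ i₀),
          Finset.prod_update_of_mem (Finset.mem_univ i₀),
          HPoly.smul_apply, smul_eq_mul, smul_eq_mul, mul_assoc] } with hDraw
  have Hbound : ∀ q : Fin n → HPoly 𝕜 k F 𝕜,
      ‖Draw q‖ ≤ ‖A‖ ^ (k * n) * ∏ i, ‖q i‖ := by
    intro q
    have hnn : (0 : ℝ) ≤ ‖A‖ ^ (k * n) * ∏ i, ‖q i‖ :=
      mul_nonneg (pow_nonneg (norm_nonneg A) _)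
        (Finset.prod_nonneg fun i _ => norm_nonneg _)
    show polyNorm ⇑(Draw q) ≤ _
    refine Real.sSup_le ?_ hnn
    rintro r ⟨x, hx, rfl⟩
    show ‖∏ i, (q i) (P x)‖ ≤ _
    rw [norm_prod]
    calc ∏ i, ‖(q i) (P x)‖ ≤ ∏ i, (‖q i‖ * ‖A‖ ^ k) := by
          refine Finset.prod_le_prod (fun i _ => norm_nonneg _) fun i _ => ?_
          calc ‖(q i) (P x)‖ ≤ ‖q i‖ * ‖P x‖ ^ k := HPoly.norm_apply_le hk (q i) (P x)
            _ ≤ ‖q i‖ * ‖A‖ ^ k := by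
                refine mul_le_mul_of_nonneg_left
                  (pow_le_pow_left₀ (norm_nonneg _) (hPx x hx) k) (norm_nonneg (q i))
      _ = ‖A‖ ^ (k * n) * ∏ i, ‖q i‖ := by
          rw [Finset.prod_mul_distrib, Finset.prod_const, Finset.card_univ,
            Fintype.card_fin, ← pow_mul]
          ring
  set 𝒟 : ContinuousMultilinearMap 𝕜 (fun _ : Fin n => HPoly 𝕜 k F 𝕜)
      (HPoly 𝕜 (m * n * k) E 𝕜) :=
    Draw.mkContinuous (‖A‖ ^ (k * n)) Hbound with h𝒟
  refine ⟨fun q => 𝒟 fun _ => q, fun q x => ?_, ⟨𝒟, fun q => rfl⟩⟩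
  show (∏ _i : Fin n, q (P x)) = q (P x) ^ n
  rw [Finset.prod_const, Finset.card_univ, Fintype.card_fin]
end

section
/- Let E and F be Banach spaces over 𝕜 (= ℝ or ℂ), let m, n, k ≥ 1 and P ∈ 𝒫(^mE;F). Then the norm of the generalized adjoint satisfies ‖Δ_k^n P‖ := sup_{q ∈ 𝒫(^kF), ‖q‖≤1} ‖(Δ_k^n P)(q)‖ = ‖P‖^{kn}. -/
open scoped NNReal ENNReal

namespace HPoly

variable {𝕜 : Type*} [RCLike 𝕜] {m : ℕ} {E F : Type*}
  [NormedAddCommGroup E] [NormedSpace 𝕜 E] [NormedAddCommGroup F] [NormedSpace 𝕜 F]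

theorem apply_le_norm (P : HPoly 𝕜 m E F) {x : E} (hx : ‖x‖ ≤ 1) : ‖P x‖ ≤ ‖P‖ :=
  le_csSup (bddAbove_image P) ⟨x, hx, rfl⟩

theorem map_smul_pow (P : HPoly 𝕜 m E F) (c : 𝕜) (x : E) :
    P (c • x) = c ^ m • P x := by
  obtain ⟨A, hA⟩ := P.isPoly'
  show P.toFun _ = _ • P.toFun _
  rw [hA, hA]
  have h := A.map_smul_univ (fun _ : Fin m => c) (fun _ : Fin m => x)
  simpa [Finset.prod_const] using h

theorem map_zero'' (hm : 1 ≤ m) (P : HPoly 𝕜 m E F) : P 0 = 0 := by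
  obtain ⟨A, hA⟩ := P.isPoly'
  show P.toFun 0 = 0
  rw [hA]
  exact A.map_coord_zero ⟨0, hm⟩ rfl

theorem norm_apply_le_s1 (hm : 1 ≤ m) (P : HPoly 𝕜 m E F) (x : E) :
    ‖P x‖ ≤ ‖P‖ * ‖x‖ ^ m := by
  rcases eq_or_ne x 0 with rfl | hx
  · rw [map_zero'' hm P]
    simp [zero_pow (by omega : m ≠ 0)]
  · set c : 𝕜 := ((‖x‖ : ℝ) : 𝕜) with hcdef
    have hc0 : (‖x‖ : ℝ) ≠ 0 := norm_ne_zero_iff.2 hx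
    have hc : c ≠ 0 := by
      simp only [hcdef, ne_eq, RCLike.ofReal_eq_zero]; exact hc0
    have hu : ‖(c⁻¹ • x : E)‖ ≤ 1 := by
      rw [norm_smul, norm_inv, hcdef, RCLike.norm_ofReal,
        abs_of_nonneg (norm_nonneg x), inv_mul_cancel₀ hc0]
    have key : P x = c ^ m • P (c⁻¹ • x) := by
      rw [← map_smul_pow P c (c⁻¹ • x), smul_smul, mul_inv_cancel₀ hc, one_smul]
    have hcn : ‖c‖ = ‖x‖ := by
      rw [hcdef, RCLike.norm_ofReal, abs_of_nonneg (norm_nonneg x)]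
    calc ‖P x‖ = ‖c‖ ^ m * ‖P (c⁻¹ • x)‖ := by rw [key, norm_smul, norm_pow]
      _ ≤ ‖c‖ ^ m * ‖P‖ := by
          exact mul_le_mul_of_nonneg_left (apply_le_norm P hu)
            (pow_nonneg (norm_nonneg c) m)
      _ = ‖P‖ * ‖x‖ ^ m := by rw [hcn, mul_comm]

/-- The `k`-homogeneous polynomial `y ↦ (f y) ^ k`. -/
noncomputable def dualPow (k : ℕ) (f : F →L[𝕜] 𝕜) : HPoly 𝕜 k F 𝕜 :=
  ⟨fun y => (f y) ^ k,
   ⟨(ContinuousMultilinearMap.mkPiAlgebra 𝕜 (Fin k) 𝕜).compContinuousLinearMap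
      (fun _ => f), fun y => by
        simp [Finset.prod_const]⟩⟩

@[simp] theorem dualPow_apply (k : ℕ) (f : F →L[𝕜] 𝕜) (y : F) :
    dualPow k f y = (f y) ^ k := rfl

theorem norm_dualPow_le (k : ℕ) {f : F →L[𝕜] 𝕜} (hf : ‖f‖ ≤ 1) :
    ‖dualPow k f‖ ≤ 1 := by
  rw [norm_def]
  apply Real.sSup_le
  · rintro r ⟨y, hy, rfl⟩
    show ‖(f y) ^ k‖ ≤ 1
    rw [norm_pow]
    refine pow_le_one₀ (norm_nonneg _) ?_
    calc ‖f y‖ ≤ ‖f‖ * ‖y‖ := f.le_opNorm y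
      _ ≤ 1 * 1 := mul_le_mul hf hy (norm_nonneg y) zero_le_one
      _ = 1 := one_mul 1
  · exact zero_le_one

end HPoly

/-- `‖Δₖⁿ P‖ = sup_{‖q‖ ≤ 1} ‖(Δₖⁿ P) q‖ = ‖P‖ ^ (k * n)`. -/
theorem statement1 (𝕜 : Type*) [RCLike 𝕜] (E F : Type*)
    [NormedAddCommGroup E] [NormedSpace 𝕜 E] [CompleteSpace E]
    [NormedAddCommGroup F] [NormedSpace 𝕜 F] [CompleteSpace F]
    (m n k : ℕ) (hm : 1 ≤ m) (hn : 1 ≤ n) (hk : 1 ≤ k)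
    (P : HPoly 𝕜 m E F) :
    sSup ((fun q : HPoly 𝕜 k F 𝕜 => polyNorm fun x : E => q (P x) ^ n) ''
        {q : HPoly 𝕜 k F 𝕜 | ‖q‖ ≤ 1}) = ‖P‖ ^ (k * n) := by
  have hkn : k * n ≠ 0 := by positivity
  -- pointwise upper bound
  have hub : ∀ q : HPoly 𝕜 k F 𝕜, ‖q‖ ≤ 1 → ∀ x : E, ‖x‖ ≤ 1 →
      ‖q (P x) ^ n‖ ≤ ‖P‖ ^ (k * n) := by
    intro q hq x hx
    rw [norm_pow]
    have h1 : ‖q (P x)‖ ≤ ‖P x‖ ^ k := by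
      calc ‖q (P x)‖ ≤ ‖q‖ * ‖P x‖ ^ k := HPoly.norm_apply_le_s1 hk q (P x)
        _ ≤ 1 * ‖P x‖ ^ k :=
            mul_le_mul_of_nonneg_right hq (pow_nonneg (norm_nonneg _) k)
        _ = ‖P x‖ ^ k := one_mul _
    calc ‖q (P x)‖ ^ n ≤ (‖P x‖ ^ k) ^ n :=
          pow_le_pow_left₀ (norm_nonneg _) h1 n
      _ = ‖P x‖ ^ (k * n) := by rw [← pow_mul]
      _ ≤ ‖P‖ ^ (k * n) :=
          pow_le_pow_left₀ (norm_nonneg _) (HPoly.apply_le_norm P hx) (k * n)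
  set A := (fun q : HPoly 𝕜 k F 𝕜 => polyNorm fun x : E => q (P x) ^ n) ''
      {q : HPoly 𝕜 k F 𝕜 | ‖q‖ ≤ 1} with hA
  have hmemle : ∀ r ∈ A, r ≤ ‖P‖ ^ (k * n) := by
    rintro r ⟨q, hq, rfl⟩
    apply Real.sSup_le
    · rintro s ⟨x, hx, rfl⟩
      exact hub q hq x hx
    · positivity
  have hBdd : BddAbove A := ⟨‖P‖ ^ (k * n), hmemle⟩
  have hle : sSup A ≤ ‖P‖ ^ (k * n) := Real.sSup_le hmemle (by positivity)
  -- lower bound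
  have hS0 : 0 ≤ sSup A := by
    have h0 : polyNorm (fun x : E => (0 : HPoly 𝕜 k F 𝕜) (P x) ^ n) ∈ A :=
      ⟨0, by simp only [Set.mem_setOf_eq, norm_zero]; exact zero_le_one, rfl⟩
    refine le_trans ?_ (le_csSup hBdd h0)
    have : (fun x : E => ‖(0 : HPoly 𝕜 k F 𝕜) (P x) ^ n‖) '' {x : E | ‖x‖ ≤ 1}
        = {0} := by
      apply Set.eq_singleton_iff_nonempty_unique_mem.2
      refine ⟨⟨0, 0, by simp, by simp [zero_pow (by omega : n ≠ 0)]⟩, ?_⟩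
      rintro r ⟨x, -, rfl⟩
      simp [zero_pow (by omega : n ≠ 0)]
    rw [polyNorm, this, csSup_singleton]
  have hkey : ∀ x : E, ‖x‖ ≤ 1 → ‖P x‖ ^ (k * n) ≤ sSup A := by
    intro x hx
    rcases eq_or_ne (P x) 0 with h0 | h0
    · rw [h0]; simpa [zero_pow hkn] using hS0
    · obtain ⟨f, hf1, hfx⟩ := exists_dual_vector 𝕜 (P x) (norm_ne_zero_iff.2 h0)
      have hq : ‖HPoly.dualPow k f‖ ≤ 1 := HPoly.norm_dualPow_le k (le_of_eq hf1)
      have hBdd' : BddAbove ((fun y : E => ‖(HPoly.dualPow k f) (P y) ^ n‖) ''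
          {y : E | ‖y‖ ≤ 1}) := by
        refine ⟨‖P‖ ^ (k * n), ?_⟩
        rintro r ⟨y, hy, rfl⟩
        exact hub _ hq y hy
      have h2 : ‖P x‖ ^ (k * n) ≤
          polyNorm (fun y : E => (HPoly.dualPow k f) (P y) ^ n) := by
        have heq : ‖(HPoly.dualPow k f) (P x) ^ n‖ = ‖P x‖ ^ (k * n) := by
          rw [HPoly.dualPow_apply, ← pow_mul, norm_pow]
          congr 1
          rw [hfx, RCLike.norm_ofReal, abs_of_nonneg (norm_nonneg _)]
        rw [← heq]
        exact le_csSup hBdd' ⟨x, hx, rfl⟩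
      exact h2.trans (le_csSup hBdd ⟨HPoly.dualPow k f, hq, rfl⟩)
  have hNR : ((k * n : ℕ) : ℝ) ≠ 0 := by positivity
  have hP : ‖P‖ ≤ sSup A ^ (((k * n : ℕ) : ℝ)⁻¹) := by
    rw [HPoly.norm_def]
    apply Real.sSup_le
    · rintro r ⟨x, hx, rfl⟩
      have h := hkey x hx
      have hx0 : (0 : ℝ) ≤ ‖P x‖ := norm_nonneg _
      have hid : ‖P x‖ = (‖P x‖ ^ (k * n)) ^ (((k * n : ℕ) : ℝ)⁻¹) := by
        rw [← Real.rpow_natCast ‖P x‖ (k * n), ← Real.rpow_mul hx0,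
          mul_inv_cancel₀ hNR, Real.rpow_one]
      show ‖P x‖ ≤ sSup A ^ (((k * n : ℕ) : ℝ)⁻¹)
      rw [hid]
      exact Real.rpow_le_rpow (pow_nonneg hx0 _) h (by positivity)
    · exact Real.rpow_nonneg hS0 _
  have hge : ‖P‖ ^ (k * n) ≤ sSup A := by
    calc ‖P‖ ^ (k * n) ≤ (sSup A ^ (((k * n : ℕ) : ℝ)⁻¹)) ^ (k * n) :=
          pow_le_pow_left₀ (norm_nonneg P) hP (k * n)
      _ = sSup A := by
          rw [← Real.rpow_natCast (sSup A ^ (((k * n : ℕ) : ℝ)⁻¹)) (k * n),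
            ← Real.rpow_mul hS0, inv_mul_cancel₀ hNR, Real.rpow_one]
  exact le_antisymm hle hge
end

section
/- Let E and F be Banach spaces over 𝕜 (= ℝ or ℂ) with E ≠ {0} and F ≠ {0}, and let m, n, k ≥ 1. Then Δ_k^n(P + Q) = Δ_k^n P + Δ_k^n Q holds for all P, Q ∈ 𝒫(^mE;F) if and only if k = n = 1. -/
open scoped NNReal ENNReal

/-- For nontrivial Banach spaces `E, F` and `m, n, k ≥ 1`:
`Δₖⁿ (P + Q) = Δₖⁿ P + Δₖⁿ Q` for all `P, Q ∈ 𝒫(^mE;F)` iff `k = n = 1`. -/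
theorem statement5 (𝕜 : Type*) [RCLike 𝕜] (E F : Type*)
    [NormedAddCommGroup E] [NormedSpace 𝕜 E] [CompleteSpace E] [Nontrivial E]
    [NormedAddCommGroup F] [NormedSpace 𝕜 F] [CompleteSpace F] [Nontrivial F]
    (m n k : ℕ) (hm : 1 ≤ m) (hn : 1 ≤ n) (hk : 1 ≤ k) :
    (∀ P Q : E → F, IsHomPoly 𝕜 m P → IsHomPoly 𝕜 m Q →
        ∀ q : F → 𝕜, IsHomPoly 𝕜 k q →
          ∀ x : E, q (P x + Q x) ^ n = q (P x) ^ n + q (Q x) ^ n) ↔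
      k = 1 ∧ n = 1 := by
  constructor
  · intro h
    -- pick nonzero points and dual functionals
    obtain ⟨x₀, hx₀⟩ := exists_ne (0 : E)
    obtain ⟨y, hy⟩ := exists_ne (0 : F)
    obtain ⟨f, -, hf⟩ := exists_dual_vector 𝕜 x₀ (norm_ne_zero_iff.mpr hx₀)
    obtain ⟨ψ, -, hψ⟩ := exists_dual_vector 𝕜 y (norm_ne_zero_iff.mpr hy)
    -- P x = (∏ f x) • y,  q z = (ψ z)^k
    set A : ContinuousMultilinearMap 𝕜 (fun _ : Fin m => E) F :=
      (ContinuousMultilinearMap.mkPiRing 𝕜 (Fin m) y).compContinuousLinearMap (fun _ => f)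
    set P : E → F := fun x => A (fun _ => x)
    have hP : IsHomPoly 𝕜 m P := ⟨A, fun _ => rfl⟩
    set B : ContinuousMultilinearMap 𝕜 (fun _ : Fin k => F) 𝕜 :=
      (ContinuousMultilinearMap.mkPiAlgebra 𝕜 (Fin k) 𝕜).compContinuousLinearMap (fun _ => ψ)
    set q : F → 𝕜 := fun z => B (fun _ => z)
    have hq : IsHomPoly 𝕜 k q := ⟨B, fun _ => rfl⟩
    have hqz : ∀ z, q z = (ψ z) ^ k := by
      intro z
      simp [q, B, ContinuousMultilinearMap.compContinuousLinearMap_apply]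
    have hPx : P x₀ = ((f x₀) ^ m) • y := by
      simp [P, A, ContinuousMultilinearMap.compContinuousLinearMap_apply]
    have key := h P P hP hP q hq x₀
    have hfx : (f x₀ : 𝕜) ≠ 0 := by
      rw [hf]
      exact_mod_cast norm_ne_zero_iff.mpr hx₀
    have hψy : (ψ y : 𝕜) ≠ 0 := by
      rw [hψ]
      exact_mod_cast norm_ne_zero_iff.mpr hy
    have hc : ((f x₀) ^ m * ψ y) ^ (k * n) ≠ 0 := by
      exact pow_ne_zero _ (mul_ne_zero (pow_ne_zero _ hfx) hψy)
    have h2 : (2 : 𝕜) ^ (k * n) = 2 := by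
      have := key
      rw [hqz, hqz, hPx] at this
      have hPP : ((f x₀) ^ m) • y + ((f x₀) ^ m) • y = ((2 : 𝕜) * (f x₀) ^ m) • y := by
        rw [two_mul, add_smul]
      rw [hPP, map_smul, map_smul, smul_eq_mul, smul_eq_mul] at this
      have h2c : (2 : 𝕜) ^ (k * n) * ((f x₀ ^ m) * ψ y) ^ (k * n)
          = 2 * ((f x₀ ^ m) * ψ y) ^ (k * n) := by
        linear_combination this
      exact mul_right_cancel₀ hc h2c
    have hkn : k * n = 1 := by
      have : ((2 : ℕ) : 𝕜) ^ (k * n) = ((2 : ℕ) : 𝕜) ^ 1 := by push_cast; simpa using h2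
      have h2' : (2 : ℕ) ^ (k * n) = 2 ^ 1 := by
        exact_mod_cast (by push_cast at this ⊢; exact_mod_cast this : ((2 ^ (k * n) : ℕ) : 𝕜) = ((2 ^ 1 : ℕ) : 𝕜))
      exact Nat.pow_right_injective (le_refl 2) h2'
    exact ⟨Nat.eq_one_of_mul_eq_one_right hkn, Nat.eq_one_of_mul_eq_one_left hkn⟩
  · rintro ⟨rfl, rfl⟩
    intro P Q hP hQ q hq x
    obtain ⟨B, hB⟩ := hq
    have hadd : ∀ z w : F, q (z + w) = q z + q w := by
      intro z w
      have h1 : ∀ v : F, (fun _ : Fin 1 => v) = Function.update (fun _ : Fin 1 => z) 0 v := by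
        intro v; funext i; fin_cases i <;> simp
      rw [hB, hB, hB, h1 (z + w), B.map_update_add, ← h1 z, ← h1 w]
    simp [hadd]
end

section
/- Let E and F be real Banach spaces, m, n, k ≥ 1 with kn odd. Then the correspondence P ∈ 𝒫(^mE;F) ↦ Δ_k^n P ∈ 𝒫(^n 𝒫(^kF); 𝒫(^{mnk}E)) is injective: if P₁, P₂ ∈ 𝒫(^mE;F) satisfy (q(P₁(x)))^n = (q(P₂(x)))^n for every q ∈ 𝒫(^kF) and every x ∈ E, then P₁ = P₂. -/
open scoped NNReal ENNReal

/-- For real Banach spaces and `kn` odd, `P ↦ Δₖⁿ P` is injective. -/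
theorem statement9 (E F : Type*)
    [NormedAddCommGroup E] [NormedSpace ℝ E] [CompleteSpace E]
    [NormedAddCommGroup F] [NormedSpace ℝ F] [CompleteSpace F]
    (m n k : ℕ) (hm : 1 ≤ m) (hn : 1 ≤ n) (hk : 1 ≤ k) (hodd : Odd (k * n))
    (P₁ P₂ : E → F) (h₁ : IsHomPoly ℝ m P₁) (h₂ : IsHomPoly ℝ m P₂)
    (h : ∀ q : F → ℝ, IsHomPoly ℝ k q → ∀ x : E, q (P₁ x) ^ n = q (P₂ x) ^ n) :
    P₁ = P₂ := by
  funext x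
  rw [NormedSpace.eq_iff_forall_dual_eq (𝕜 := ℝ)]
  intro f
  have hq : IsHomPoly ℝ k (fun y : F => (f y) ^ k) := by
    refine ⟨(ContinuousMultilinearMap.mkPiAlgebra ℝ (Fin k) ℝ).compContinuousLinearMap
      (fun _ => f), fun y => ?_⟩
    simp [Finset.prod_const, Finset.card_univ]
  have := h _ hq x
  simp only [← pow_mul] at this
  exact hodd.strictMono_pow.injective this
end

section
/- Let E be a Banach space over 𝕜 (= ℝ or ℂ) and m, n ≥ 1. The map J_E^{m,n} : E → 𝒫(^m 𝒫(^nE)) defined by J_E^{m,n}(x)(q) = (q(x))^m is a continuous mn-homogeneous polynomial, and ‖J_E^{m,n}(x)‖ = ‖x‖^{mn} for every x ∈ E. -/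
open scoped NNReal ENNReal

namespace St14

open Finset

variable {𝕜 : Type*} [RCLike 𝕜] {E : Type*} [NormedAddCommGroup E] [NormedSpace 𝕜 E]

/-- Sign attached to a boolean. -/
def sg (𝕜 : Type*) [RCLike 𝕜] (b : Bool) : 𝕜 := if b then 1 else -1

lemma norm_sg (b : Bool) : ‖sg 𝕜 b‖ = 1 := by cases b <;> simp [sg]

/-- Unnormalized polarization of a homogeneous polynomial. -/
noncomputable def polFun {n : ℕ} (q : HPoly 𝕜 n E 𝕜) (y : Fin n → E) : 𝕜 :=
  ∑ ε : Fin n → Bool, (∏ i, sg 𝕜 (ε i)) * q (∑ i, sg 𝕜 (ε i) • y i)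

lemma polFun_add_q {n : ℕ} (a b : HPoly 𝕜 n E 𝕜) (y : Fin n → E) :
    polFun (a + b) y = polFun a y + polFun b y := by
  unfold polFun
  rw [← Finset.sum_add_distrib]
  exact Finset.sum_congr rfl fun ε _ => by rw [HPoly.add_apply, mul_add]

lemma polFun_smul_q {n : ℕ} (c : 𝕜) (a : HPoly 𝕜 n E 𝕜) (y : Fin n → E) :
    polFun (c • a) y = c * polFun a y := by
  unfold polFun
  rw [Finset.mul_sum]
  exact Finset.sum_congr rfl fun ε _ => by rw [HPoly.smul_apply, smul_eq_mul]; ring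

/-- Symmetrization of a multilinear map. -/
noncomputable def symB {n : ℕ} (B : MultilinearMap 𝕜 (fun _ : Fin n => E) 𝕜) :
    MultilinearMap 𝕜 (fun _ : Fin n => E) 𝕜 :=
  ∑ σ : Equiv.Perm (Fin n), B.domDomCongr σ

lemma symB_apply {n : ℕ} (B : MultilinearMap 𝕜 (fun _ : Fin n => E) 𝕜) (y : Fin n → E) :
    symB B y = ∑ σ : Equiv.Perm (Fin n), B (fun i => y (σ i)) := by
  rw [symB, MultilinearMap.sum_apply]
  rfl

/-- The polarization identity. -/
lemma polKey {n : ℕ} (q : HPoly 𝕜 n E 𝕜) (B : MultilinearMap 𝕜 (fun _ : Fin n => E) 𝕜)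
    (hB : ∀ z, q z = B fun _ => z) (y : Fin n → E) :
    polFun q y = 2 ^ n * symB B y := by
  classical
  have expand : ∀ ε : Fin n → Bool,
      B (fun _ => ∑ i, sg 𝕜 (ε i) • y i)
        = ∑ r : Fin n → Fin n, (∏ j, sg 𝕜 (ε (r j))) * B (fun j => y (r j)) := by
    intro ε
    have h1 := B.map_sum (g := fun (_ : Fin n) (j : Fin n) => sg 𝕜 (ε j) • y j)
    refine h1.trans (Finset.sum_congr rfl fun r _ => ?_)
    rw [B.map_smul_univ, smul_eq_mul]
  have swap : polFun q y
      = ∑ r : Fin n → Fin n,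
          (∑ ε : Fin n → Bool, (∏ i, sg 𝕜 (ε i)) * ∏ j, sg 𝕜 (ε (r j)))
            * B (fun j => y (r j)) := by
    unfold polFun
    calc ∑ ε : Fin n → Bool, (∏ i, sg 𝕜 (ε i)) * q (∑ i, sg 𝕜 (ε i) • y i)
        = ∑ ε : Fin n → Bool, ∑ r : Fin n → Fin n,
            ((∏ i, sg 𝕜 (ε i)) * ∏ j, sg 𝕜 (ε (r j))) * B (fun j => y (r j)) := by
          refine Finset.sum_congr rfl fun ε _ => ?_
          rw [hB, expand ε, Finset.mul_sum]
          exact Finset.sum_congr rfl fun r _ => by ring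
      _ = _ := by
          rw [Finset.sum_comm]
          exact Finset.sum_congr rfl fun r _ => (Finset.sum_mul _ _ _).symm
  have hcoef : ∀ r : Fin n → Fin n,
      (∑ ε : Fin n → Bool, (∏ i, sg 𝕜 (ε i)) * ∏ j, sg 𝕜 (ε (r j)))
        = if Function.Bijective r then (2 : 𝕜) ^ n else 0 := by
    intro r
    have fib : ∀ ε : Fin n → Bool, (∏ i, sg 𝕜 (ε i)) * ∏ j, sg 𝕜 (ε (r j))
        = ∏ i, sg 𝕜 (ε i) ^ (#(univ.filter fun j => r j = i) + 1) := by
      intro ε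
      have h2 : ∏ j, sg 𝕜 (ε (r j)) = ∏ i, sg 𝕜 (ε i) ^ #(univ.filter fun j => r j = i) := by
        rw [← Finset.prod_fiberwise_of_maps_to (g := r) (fun j _ => Finset.mem_univ (r j))
          (fun j => sg 𝕜 (ε (r j)))]
        refine Finset.prod_congr rfl fun i _ => ?_
        rw [Finset.prod_congr rfl (fun j hj => by rw [(Finset.mem_filter.1 hj).2]),
          Finset.prod_const]
      rw [h2, ← Finset.prod_mul_distrib]
      exact Finset.prod_congr rfl fun i _ => (pow_succ' _ _).symm
    simp_rw [fib]
    rw [← Fintype.prod_sum (fun (i : Fin n) (b : Bool) =>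
      sg 𝕜 b ^ (#(univ.filter fun j => r j = i) + 1))]
    by_cases hr : Function.Bijective r
    · rw [if_pos hr]
      have hm : ∀ i, #(univ.filter fun j => r j = i) = 1 := by
        intro i
        have : (univ.filter fun j => r j = i) = {(Equiv.ofBijective r hr).symm i} := by
          ext j
          simp only [Finset.mem_filter, Finset.mem_univ, true_and, Finset.mem_singleton]
          exact (Equiv.ofBijective r hr).apply_eq_iff_eq_symm_apply
        rw [this, Finset.card_singleton]
      simp only [hm]
      have : ∀ _i : Fin n, (∑ b : Bool, sg 𝕜 b ^ (1 + 1)) = 2 := by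
        intro i
        simp [sg, Fintype.sum_bool]
      rw [Finset.prod_congr rfl fun i _ => this i, Finset.prod_const, Finset.card_univ,
        Fintype.card_fin]
    · rw [if_neg hr]
      have hns : ¬ Function.Surjective r := fun hs =>
        hr ((Fintype.bijective_iff_surjective_and_card r).2 ⟨hs, rfl⟩)
      rw [Function.Surjective] at hns
      push_neg at hns
      obtain ⟨i₀, hi₀⟩ := hns
      refine Finset.prod_eq_zero (Finset.mem_univ i₀) ?_
      have : (univ.filter fun j => r j = i₀) = ∅ := by
        ext j; simp [hi₀ j]
      rw [this]
      simp [sg, Fintype.sum_bool]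
  rw [swap,
    Finset.sum_congr rfl fun (r : Fin n → Fin n) _ => by rw [hcoef r],
    symB_apply, Finset.mul_sum]
  simp_rw [ite_mul, zero_mul]
  rw [Finset.sum_ite, Finset.sum_const_zero, add_zero]
  refine Finset.sum_bij' (fun (r : Fin n → Fin n) hr => Equiv.ofBijective r (by simpa using hr))
    (fun (σ : Equiv.Perm (Fin n)) _ => ⇑σ) ?_ ?_ ?_ ?_ ?_
  · intro r hr; exact Finset.mem_univ _
  · intro σ _; exact Finset.mem_filter.2 ⟨Finset.mem_univ _, σ.bijective⟩
  · intro r hr; rfl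
  · intro σ _; exact Equiv.ext fun z => rfl
  · intro r hr; rfl

/-- Choose a generating multilinear map, as a plain multilinear map. -/
lemma exists_gen {n : ℕ} (q : HPoly 𝕜 n E 𝕜) :
    ∃ B : MultilinearMap 𝕜 (fun _ : Fin n => E) 𝕜, ∀ z, q z = B fun _ => z := by
  obtain ⟨B, hB⟩ := q.isPoly'
  exact ⟨B.toMultilinearMap, hB⟩

lemma polFun_update_add {n : ℕ} (q : HPoly 𝕜 n E 𝕜) (y : Fin n → E) (i : Fin n) (a b : E) :
    polFun q (Function.update y i (a + b))
      = polFun q (Function.update y i a) + polFun q (Function.update y i b) := by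
  obtain ⟨B, hB⟩ := exists_gen q
  rw [polKey q B hB, polKey q B hB, polKey q B hB, (symB B).map_update_add, mul_add]

lemma polFun_update_smul {n : ℕ} (q : HPoly 𝕜 n E 𝕜) (y : Fin n → E) (i : Fin n) (c : 𝕜)
    (a : E) :
    polFun q (Function.update y i (c • a)) = c * polFun q (Function.update y i a) := by
  obtain ⟨B, hB⟩ := exists_gen q
  rw [polKey q B hB, polKey q B hB, (symB B).map_update_smul, smul_eq_mul]
  ring

lemma polFun_coord_zero {n : ℕ} (q : HPoly 𝕜 n E 𝕜) (y : Fin n → E) (i : Fin n)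
    (h : y i = 0) : polFun q y = 0 := by
  obtain ⟨B, hB⟩ := exists_gen q
  rw [polKey q B hB, (symB B).map_coord_zero i h, mul_zero]

lemma polFun_smul_univ {n : ℕ} (q : HPoly 𝕜 n E 𝕜) (c : Fin n → 𝕜) (y : Fin n → E) :
    polFun q (fun i => c i • y i) = (∏ i, c i) * polFun q y := by
  obtain ⟨B, hB⟩ := exists_gen q
  rw [polKey q B hB, polKey q B hB, (symB B).map_smul_univ, smul_eq_mul]
  ring

lemma polFun_diag {n : ℕ} (q : HPoly 𝕜 n E 𝕜) (x : E) :
    polFun q (fun _ => x) = ((2 : 𝕜) ^ n * (n.factorial : 𝕜)) * q x := by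
  obtain ⟨B, hB⟩ := exists_gen q
  rw [polKey q B hB, symB_apply]
  have : ∀ σ : Equiv.Perm (Fin n), (B fun i => (fun _ => x) (σ i)) = q x := fun σ =>
    (hB x).symm
  rw [Finset.sum_congr rfl fun σ _ => this σ, Finset.sum_const, Finset.card_univ,
    Fintype.card_perm, Fintype.card_fin, nsmul_eq_mul]
  ring

/-- The basic estimate `‖q z‖ ≤ ‖q‖ * ‖z‖ ^ n`. -/
lemma HPoly_le {n : ℕ} (hn : 1 ≤ n) (q : HPoly 𝕜 n E 𝕜) (z : E) :
    ‖q z‖ ≤ ‖q‖ * ‖z‖ ^ n := by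
  have hball : ∀ w : E, ‖w‖ ≤ 1 → ‖q w‖ ≤ ‖q‖ := fun w hw =>
    le_csSup (HPoly.bddAbove_image q) ⟨w, hw, rfl⟩
  rcases eq_or_ne z 0 with rfl | hz
  · obtain ⟨B, hB⟩ := exists_gen q
    have h0 : q 0 = 0 := by
      rw [hB]
      exact B.map_coord_zero (⟨0, hn⟩ : Fin n) rfl
    simp [h0, zero_pow (by omega : n ≠ 0)]
  · set c : 𝕜 := ((‖z‖ : ℝ) : 𝕜) with hcdef
    have hc : c ≠ 0 := by
      simp only [hcdef, ne_eq, RCLike.ofReal_eq_zero]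
      exact norm_ne_zero_iff.2 hz
    have hu : ‖(c⁻¹ • z : E)‖ ≤ 1 := by
      rw [norm_smul, norm_inv, hcdef, RCLike.norm_ofReal, abs_of_nonneg (norm_nonneg z),
        inv_mul_cancel₀ (norm_ne_zero_iff.2 hz)]
    obtain ⟨B, hB⟩ := exists_gen q
    have key : q z = c ^ n • q (c⁻¹ • z) := by
      rw [hB z, hB (c⁻¹ • z)]
      have h2 := B.map_smul_univ (fun _ : Fin n => c) (fun _ : Fin n => c⁻¹ • z)
      rw [Finset.prod_const] at h2
      have h3 : (fun _ : Fin n => c • c⁻¹ • z) = fun _ : Fin n => z := by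
        funext i
        rw [smul_smul, mul_inv_cancel₀ hc, one_smul]
      rw [h3] at h2
      simp only [Finset.card_univ, Fintype.card_fin] at h2
      exact h2
    rw [key, smul_eq_mul, norm_mul, norm_pow]
    have hcn : ‖c‖ = ‖z‖ := by
      rw [hcdef, RCLike.norm_ofReal, abs_of_nonneg (norm_nonneg z)]
    rw [hcn, mul_comm (‖q‖)]
    exact mul_le_mul_of_nonneg_left (hball _ hu) (pow_nonneg (norm_nonneg z) n)

/-- The fundamental estimate on the polarization. -/
lemma polFun_le {n : ℕ} (hn : 1 ≤ n) (q : HPoly 𝕜 n E 𝕜) (y : Fin n → E) :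
    ‖polFun q y‖ ≤ ((2 : ℝ) ^ n * (n : ℝ) ^ n) * ‖q‖ * ∏ i, ‖y i‖ := by
  by_cases hy : ∃ i, y i = 0
  · obtain ⟨i, hi⟩ := hy
    rw [polFun_coord_zero q y i hi, norm_zero,
      Finset.prod_eq_zero (Finset.mem_univ i) (by rw [hi, norm_zero]), mul_zero]
  · push_neg at hy
    set y' : Fin n → E := fun i => ((‖y i‖ : ℝ) : 𝕜)⁻¹ • y i with hy'
    have hc : ∀ i, ((‖y i‖ : ℝ) : 𝕜) ≠ 0 := fun i => by
      simp only [ne_eq, RCLike.ofReal_eq_zero]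
      exact norm_ne_zero_iff.2 (hy i)
    have hnorm1 : ∀ i, ‖y' i‖ = 1 := by
      intro i
      rw [hy']
      simp only
      rw [norm_smul, norm_inv, RCLike.norm_ofReal, abs_of_nonneg (norm_nonneg _),
        inv_mul_cancel₀ (norm_ne_zero_iff.2 (hy i))]
    have hrepr : (fun i => ((‖y i‖ : ℝ) : 𝕜) • y' i) = y := by
      funext i
      rw [hy']
      simp only
      rw [smul_smul, mul_inv_cancel₀ (hc i), one_smul]
    have hsmul : polFun q y = (∏ i, ((‖y i‖ : ℝ) : 𝕜)) * polFun q y' := by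
      conv_lhs => rw [← hrepr]
      exact polFun_smul_univ q _ y'
    have hbound : ‖polFun q y'‖ ≤ (2 : ℝ) ^ n * ((n : ℝ) ^ n * ‖q‖) := by
      unfold polFun
      refine le_trans (norm_sum_le _ _) ?_
      have hterm : ∀ ε : Fin n → Bool,
          ‖(∏ i, sg 𝕜 (ε i)) * q (∑ i, sg 𝕜 (ε i) • y' i)‖ ≤ (n : ℝ) ^ n * ‖q‖ := by
        intro ε
        rw [norm_mul, norm_prod]
        simp only [norm_sg, Finset.prod_const_one, one_mul]
        have hz : ‖∑ i, sg 𝕜 (ε i) • y' i‖ ≤ (n : ℝ) := by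
          refine le_trans (norm_sum_le _ _) ?_
          have : ∀ i : Fin n, ‖sg 𝕜 (ε i) • y' i‖ = 1 := by
            intro i
            rw [norm_smul, norm_sg, hnorm1 i, one_mul]
          rw [Finset.sum_congr rfl fun i _ => this i, Finset.sum_const, Finset.card_univ,
            Fintype.card_fin, nsmul_eq_mul, mul_one]
        calc ‖q (∑ i, sg 𝕜 (ε i) • y' i)‖ ≤ ‖q‖ * ‖∑ i, sg 𝕜 (ε i) • y' i‖ ^ n :=
              HPoly_le hn q _
          _ ≤ ‖q‖ * (n : ℝ) ^ n :=
              mul_le_mul_of_nonneg_left (pow_le_pow_left₀ (norm_nonneg _) hz n) (norm_nonneg q)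
          _ = (n : ℝ) ^ n * ‖q‖ := mul_comm _ _
      refine le_trans (Finset.sum_le_sum fun ε _ => hterm ε) ?_
      rw [Finset.sum_const, Finset.card_univ, nsmul_eq_mul]
      have hcard : (Fintype.card (Fin n → Bool) : ℝ) = 2 ^ n := by
        rw [Fintype.card_fun, Fintype.card_bool, Fintype.card_fin]
        push_cast
        ring
      rw [hcard]
    have hprod : ‖(∏ i, ((‖y i‖ : ℝ) : 𝕜))‖ = ∏ i, ‖y i‖ := by
      rw [norm_prod]
      exact Finset.prod_congr rfl fun i _ => by
        rw [RCLike.norm_ofReal, abs_of_nonneg (norm_nonneg _)]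
    rw [hsmul, norm_mul, hprod]
    calc (∏ i, ‖y i‖) * ‖polFun q y'‖
        ≤ (∏ i, ‖y i‖) * ((2 : ℝ) ^ n * ((n : ℝ) ^ n * ‖q‖)) :=
          mul_le_mul_of_nonneg_left hbound (Finset.prod_nonneg fun i _ => norm_nonneg _)
      _ = (2 : ℝ) ^ n * (n : ℝ) ^ n * ‖q‖ * ∏ i, ‖y i‖ := by ring

/-! ### The block structure on `Fin (m * n)` -/

/-- The `j`-th block of length `n` of a vector indexed by `Fin (m * n)`. -/
def blk (m n : ℕ) (x : Fin (m * n) → E) (j : Fin m) : Fin n → E :=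
  fun i => x (finProdFinEquiv (j, i))

lemma blk_update_ne {m n : ℕ} [DecidableEq (Fin (m * n))] (x : Fin (m * n) → E) (k : Fin (m * n)) (v : E) {j : Fin m}
    (h : j ≠ (finProdFinEquiv.symm k).1) :
    blk m n (Function.update x k v) j = blk m n x j := by
  funext i
  show Function.update x k v (finProdFinEquiv (j, i)) = x (finProdFinEquiv (j, i))
  refine Function.update_of_ne (fun hc => h ?_) v x
  rw [← hc, Equiv.symm_apply_apply]

lemma blk_update_eq {m n : ℕ} [DecidableEq (Fin (m * n))] (x : Fin (m * n) → E) (k : Fin (m * n)) (v : E) :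
    blk m n (Function.update x k v) (finProdFinEquiv.symm k).1
      = Function.update (blk m n x (finProdFinEquiv.symm k).1) (finProdFinEquiv.symm k).2 v := by
  funext i
  have hk : finProdFinEquiv ((finProdFinEquiv.symm k).1, (finProdFinEquiv.symm k).2) = k := by
    rw [Prod.mk.eta, Equiv.apply_symm_apply]
  show Function.update x k v (finProdFinEquiv ((finProdFinEquiv.symm k).1, i))
      = Function.update (blk m n x (finProdFinEquiv.symm k).1) (finProdFinEquiv.symm k).2 v i
  rcases eq_or_ne i (finProdFinEquiv.symm k).2 with rfl | hi
  · rw [hk, Function.update_self, Function.update_self]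
  · have hne : finProdFinEquiv ((finProdFinEquiv.symm k).1, i) ≠ k := by
      intro hc
      refine hi ?_
      have h5 : ((finProdFinEquiv.symm k).1, i) = finProdFinEquiv.symm k := by
        rw [← hc, Equiv.symm_apply_apply]
      exact congrArg Prod.snd h5
    rw [Function.update_of_ne hi, Function.update_of_ne hne]
    rfl

/-- The normalizing constant. -/
noncomputable def kconst (𝕜 : Type*) [RCLike 𝕜] (m n : ℕ) : 𝕜 :=
  (((2 : 𝕜) ^ n * (n.factorial : 𝕜))⁻¹) ^ m

lemma twofac_ne_zero (𝕜 : Type*) [RCLike 𝕜] (n : ℕ) :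
    ((2 : 𝕜) ^ n * (n.factorial : 𝕜)) ≠ 0 :=
  mul_ne_zero (pow_ne_zero _ two_ne_zero) (Nat.cast_ne_zero.2 n.factorial_ne_zero)

variable (𝕜 E) in
/-- The underlying m-linear-in-`q` map of `Araw`. -/
noncomputable def Gmap (m n : ℕ) (x : Fin (m * n) → E) :
    MultilinearMap 𝕜 (fun _ : Fin m => HPoly 𝕜 n E 𝕜) 𝕜 where
  toFun qs := kconst 𝕜 m n * ∏ j, polFun (qs j) (blk m n x j)
  map_update_add' {dec} qs k a b := by
    rw [Subsingleton.elim dec (by infer_instance)]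
    have hfac : ∀ v : HPoly 𝕜 n E 𝕜,
        (fun j => polFun (Function.update qs k v j) (blk m n x j))
          = Function.update (fun j => polFun (qs j) (blk m n x j)) k (polFun v (blk m n x k)) := by
      intro v
      funext j
      rcases eq_or_ne j k with rfl | h
      · rw [Function.update_self, Function.update_self]
      · rw [Function.update_of_ne h, Function.update_of_ne h]
    simp only [hfac]
    rw [Finset.prod_update_of_mem (Finset.mem_univ k),
      Finset.prod_update_of_mem (Finset.mem_univ k),
      Finset.prod_update_of_mem (Finset.mem_univ k), polFun_add_q]
    ring
  map_update_smul' {dec} qs k c a := by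
    rw [Subsingleton.elim dec (by infer_instance)]
    have hfac : ∀ v : HPoly 𝕜 n E 𝕜,
        (fun j => polFun (Function.update qs k v j) (blk m n x j))
          = Function.update (fun j => polFun (qs j) (blk m n x j)) k (polFun v (blk m n x k)) := by
      intro v
      funext j
      rcases eq_or_ne j k with rfl | h
      · rw [Function.update_self, Function.update_self]
      · rw [Function.update_of_ne h, Function.update_of_ne h]
    simp only [hfac]
    rw [Finset.prod_update_of_mem (Finset.mem_univ k),
      Finset.prod_update_of_mem (Finset.mem_univ k), polFun_smul_q, smul_eq_mul]
    ring

variable (𝕜 E) in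
/-- The value of the big multilinear map, as an `HPoly`. -/
noncomputable def Araw (m n : ℕ) (hn : 1 ≤ n) (x : Fin (m * n) → E) :
    HPoly 𝕜 m (HPoly 𝕜 n E 𝕜) 𝕜 where
  toFun q := kconst 𝕜 m n * ∏ j, polFun q (blk m n x j)
  isPoly' := by
    refine ⟨(Gmap 𝕜 E m n x).mkContinuous
      (‖kconst 𝕜 m n‖ * ∏ j, (((2 : ℝ) ^ n * (n : ℝ) ^ n) * ∏ i, ‖x (finProdFinEquiv (j, i))‖))
      ?_, fun q => rfl⟩
    intro qs
    show ‖kconst 𝕜 m n * ∏ j, polFun (qs j) (blk m n x j)‖ ≤ _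
    rw [norm_mul, norm_prod]
    calc ‖kconst 𝕜 m n‖ * ∏ j, ‖polFun (qs j) (blk m n x j)‖
        ≤ ‖kconst 𝕜 m n‖
            * ∏ j, (((2 : ℝ) ^ n * (n : ℝ) ^ n) * ∏ i, ‖x (finProdFinEquiv (j, i))‖) * ‖qs j‖ := by
          refine mul_le_mul_of_nonneg_left (Finset.prod_le_prod (fun j _ => norm_nonneg _)
            fun j _ => ?_) (norm_nonneg _)
          calc ‖polFun (qs j) (blk m n x j)‖
              ≤ ((2 : ℝ) ^ n * (n : ℝ) ^ n) * ‖qs j‖ * ∏ i, ‖blk m n x j i‖ :=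
                polFun_le hn (qs j) (blk m n x j)
            _ = ((2 : ℝ) ^ n * (n : ℝ) ^ n) * (∏ i, ‖x (finProdFinEquiv (j, i))‖) * ‖qs j‖ := by
                simp only [blk]
                ring
      _ = _ := by rw [Finset.prod_mul_distrib, ← mul_assoc]

lemma Araw_apply {m n : ℕ} (hn : 1 ≤ n) (x : Fin (m * n) → E) (q : HPoly 𝕜 n E 𝕜) :
    Araw 𝕜 E m n hn x q = kconst 𝕜 m n * ∏ j, polFun q (blk m n x j) := rfl

variable (𝕜 E) in
/-- The big `(m * n)`-linear map. -/
noncomputable def Amap (m n : ℕ) (hn : 1 ≤ n) :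
    MultilinearMap 𝕜 (fun _ : Fin (m * n) => E) (HPoly 𝕜 m (HPoly 𝕜 n E 𝕜) 𝕜) where
  toFun x := Araw 𝕜 E m n hn x
  map_update_add' {dec} x k a b := by
    ext q
    rw [HPoly.add_apply, Araw_apply, Araw_apply, Araw_apply]
    have hfac : ∀ v : E,
        (fun j => polFun q (blk m n (Function.update x k v) j))
          = Function.update (fun j => polFun q (blk m n x j)) (finProdFinEquiv.symm k).1
              (polFun q (Function.update (blk m n x (finProdFinEquiv.symm k).1)
                (finProdFinEquiv.symm k).2 v)) := by
      intro v
      funext j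
      rcases eq_or_ne j (finProdFinEquiv.symm k).1 with rfl | h
      · rw [Function.update_self, blk_update_eq]
      · rw [Function.update_of_ne h, blk_update_ne x k v h]
    simp only [hfac]
    rw [Finset.prod_update_of_mem (Finset.mem_univ _),
      Finset.prod_update_of_mem (Finset.mem_univ _),
      Finset.prod_update_of_mem (Finset.mem_univ _), polFun_update_add]
    ring
  map_update_smul' {dec} x k c a := by
    ext q
    rw [HPoly.smul_apply, Araw_apply, Araw_apply, smul_eq_mul]
    have hfac : ∀ v : E,
        (fun j => polFun q (blk m n (Function.update x k v) j))
          = Function.update (fun j => polFun q (blk m n x j)) (finProdFinEquiv.symm k).1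
              (polFun q (Function.update (blk m n x (finProdFinEquiv.symm k).1)
                (finProdFinEquiv.symm k).2 v)) := by
      intro v
      funext j
      rcases eq_or_ne j (finProdFinEquiv.symm k).1 with rfl | h
      · rw [Function.update_self, blk_update_eq]
      · rw [Function.update_of_ne h, blk_update_ne x k v h]
    simp only [hfac]
    rw [Finset.prod_update_of_mem (Finset.mem_univ _),
      Finset.prod_update_of_mem (Finset.mem_univ _), polFun_update_smul]
    ring

lemma Araw_norm_le {m n : ℕ} (hn : 1 ≤ n) (x : Fin (m * n) → E) :
    ‖Araw 𝕜 E m n hn x‖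
      ≤ (‖kconst 𝕜 m n‖ * ((2 : ℝ) ^ n * (n : ℝ) ^ n) ^ m) * ∏ k, ‖x k‖ := by
  have hC : 0 ≤ (‖kconst 𝕜 m n‖ * ((2 : ℝ) ^ n * (n : ℝ) ^ n) ^ m) * ∏ k, ‖x k‖ := by
    refine mul_nonneg (mul_nonneg (norm_nonneg _) (pow_nonneg ?_ m))
      (Finset.prod_nonneg fun k _ => norm_nonneg _)
    positivity
  show polyNorm (⇑(Araw 𝕜 E m n hn x)) ≤ _
  apply Real.sSup_le _ hC
  rintro r ⟨q, hq, rfl⟩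
  have hq1 : ‖q‖ ≤ 1 := hq
  show ‖Araw 𝕜 E m n hn x q‖ ≤ _
  rw [Araw_apply, norm_mul, norm_prod]
  calc ‖kconst 𝕜 m n‖ * ∏ j, ‖polFun q (blk m n x j)‖
      ≤ ‖kconst 𝕜 m n‖ * ∏ j, (((2 : ℝ) ^ n * (n : ℝ) ^ n) * ∏ i, ‖x (finProdFinEquiv (j, i))‖) := by
        refine mul_le_mul_of_nonneg_left (Finset.prod_le_prod (fun j _ => norm_nonneg _)
          fun j _ => ?_) (norm_nonneg _)
        calc ‖polFun q (blk m n x j)‖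
            ≤ ((2 : ℝ) ^ n * (n : ℝ) ^ n) * ‖q‖ * ∏ i, ‖blk m n x j i‖ :=
              polFun_le hn q (blk m n x j)
          _ ≤ ((2 : ℝ) ^ n * (n : ℝ) ^ n) * 1 * ∏ i, ‖blk m n x j i‖ := by
              refine mul_le_mul_of_nonneg_right (mul_le_mul_of_nonneg_left hq1 (by positivity))
                (Finset.prod_nonneg fun i _ => norm_nonneg _)
          _ = ((2 : ℝ) ^ n * (n : ℝ) ^ n) * ∏ i, ‖x (finProdFinEquiv (j, i))‖ := by
              rw [mul_one]
              simp only [blk]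
    _ = (‖kconst 𝕜 m n‖ * ((2 : ℝ) ^ n * (n : ℝ) ^ n) ^ m) * ∏ k, ‖x k‖ := by
        rw [Finset.prod_mul_distrib, Finset.prod_const, Finset.card_univ, Fintype.card_fin]
        have : ∏ j : Fin m, ∏ i : Fin n, ‖x (finProdFinEquiv (j, i))‖ = ∏ k, ‖x k‖ := by
          rw [← Fintype.prod_prod_type (fun p : Fin m × Fin n => ‖x (finProdFinEquiv p)‖)]
          exact Equiv.prod_comp finProdFinEquiv fun k => ‖x k‖
        rw [this]
        ring

variable (𝕜 E) in
/-- The big continuous `(m * n)`-linear map. -/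
noncomputable def Acont (m n : ℕ) (hn : 1 ≤ n) :
    ContinuousMultilinearMap 𝕜 (fun _ : Fin (m * n) => E) (HPoly 𝕜 m (HPoly 𝕜 n E 𝕜) 𝕜) :=
  (Amap 𝕜 E m n hn).mkContinuous (‖kconst 𝕜 m n‖ * ((2 : ℝ) ^ n * (n : ℝ) ^ n) ^ m)
    fun x => Araw_norm_le hn x

lemma Acont_apply {m n : ℕ} (hn : 1 ≤ n) (x : Fin (m * n) → E) (q : HPoly 𝕜 n E 𝕜) :
    Acont 𝕜 E m n hn x q = kconst 𝕜 m n * ∏ j, polFun q (blk m n x j) := rfl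

lemma Acont_diag {m n : ℕ} (hn : 1 ≤ n) (x : E) (q : HPoly 𝕜 n E 𝕜) :
    Acont 𝕜 E m n hn (fun _ => x) q = q x ^ m := by
  rw [Acont_apply]
  have hblk : ∀ j : Fin m, polFun q (blk m n (fun _ => x) j) = polFun q (fun _ => x) :=
    fun j => rfl
  rw [Finset.prod_congr rfl fun j _ => hblk j,
    Finset.prod_congr rfl fun j _ => polFun_diag q x, Finset.prod_const, Finset.card_univ,
    Fintype.card_fin, kconst, ← mul_pow, inv_mul_cancel_left₀ (twofac_ne_zero 𝕜 n)]

end St14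
/-- The map `J_E^{m,n} : E → 𝒫(^m 𝒫(^nE))`, `J_E^{m,n} x q = (q x)^m`,
is a continuous `mn`-homogeneous polynomial and `‖J_E^{m,n} x‖ = ‖x‖^{mn}`. -/
theorem statement14 (𝕜 : Type*) [RCLike 𝕜] (E : Type*)
    [NormedAddCommGroup E] [NormedSpace 𝕜 E] [CompleteSpace E]
    (m n : ℕ) (hm : 1 ≤ m) (hn : 1 ≤ n) :
    ∃ J : E → HPoly 𝕜 m (HPoly 𝕜 n E 𝕜) 𝕜,
      (∀ (x : E) (q : HPoly 𝕜 n E 𝕜), J x q = q x ^ m) ∧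
      IsHomPoly 𝕜 (m * n) J ∧
      ∀ x : E, ‖J x‖ = ‖x‖ ^ (m * n) := by
  refine ⟨fun x => St14.Acont 𝕜 E m n hn (fun _ => x), fun x q => St14.Acont_diag hn x q,
    ⟨St14.Acont 𝕜 E m n hn, fun x => rfl⟩, fun x => ?_⟩
  set J : E → HPoly 𝕜 m (HPoly 𝕜 n E 𝕜) 𝕜 := fun x => St14.Acont 𝕜 E m n hn (fun _ => x)
    with hJdef
  have hJ : ∀ (x : E) (q : HPoly 𝕜 n E 𝕜), J x q = q x ^ m := fun x q => St14.Acont_diag hn x q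
  have hmn : m * n ≠ 0 := by positivity
  -- upper bound
  have hupper : ‖J x‖ ≤ ‖x‖ ^ (m * n) := by
    show polyNorm (⇑(J x)) ≤ _
    apply Real.sSup_le _ (by positivity)
    rintro r ⟨q, hq, rfl⟩
    have hq1 : ‖q‖ ≤ 1 := hq
    show ‖J x q‖ ≤ ‖x‖ ^ (m * n)
    rw [hJ x q, norm_pow]
    calc ‖q x‖ ^ m ≤ (‖q‖ * ‖x‖ ^ n) ^ m :=
          pow_le_pow_left₀ (norm_nonneg _) (St14.HPoly_le hn q x) m
      _ ≤ (1 * ‖x‖ ^ n) ^ m := by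
          refine pow_le_pow_left₀ (by positivity) ?_ m
          exact mul_le_mul_of_nonneg_right hq1 (by positivity)
      _ = ‖x‖ ^ (m * n) := by rw [one_mul, ← pow_mul, mul_comm n m]
  refine le_antisymm hupper ?_
  -- lower bound
  rcases eq_or_ne x 0 with rfl | hx
  · rw [norm_zero, zero_pow hmn]
    exact HPoly.polyNorm_coe_nonneg (J 0)
  · obtain ⟨φ, hφ1, hφ2⟩ := exists_dual_vector 𝕜 x (norm_ne_zero_iff.2 hx)
    set B0 : ContinuousMultilinearMap 𝕜 (fun _ : Fin n => E) 𝕜 :=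
      (ContinuousMultilinearMap.mkPiAlgebra 𝕜 (Fin n) 𝕜).compContinuousLinearMap (fun _ => φ)
      with hB0def
    have hB0 : ∀ z : E, B0 (fun _ => z) = (φ z) ^ n := by
      intro z
      rw [hB0def, ContinuousMultilinearMap.compContinuousLinearMap_apply,
        ContinuousMultilinearMap.mkPiAlgebra_apply, Finset.prod_const, Finset.card_univ,
        Fintype.card_fin]
    set q0 : HPoly 𝕜 n E 𝕜 := ⟨fun z => (φ z) ^ n, ⟨B0, fun z => (hB0 z).symm⟩⟩ with hq0def
    have hq0z : ∀ z : E, q0 z = (φ z) ^ n := fun z => rfl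
    have hq0 : ‖q0‖ ≤ 1 := by
      show polyNorm (⇑q0) ≤ 1
      apply Real.sSup_le _ zero_le_one
      rintro r ⟨z, hz, rfl⟩
      have hz1 : ‖z‖ ≤ 1 := hz
      show ‖q0 z‖ ≤ 1
      rw [hq0z z, norm_pow]
      refine pow_le_one₀ (norm_nonneg _) ?_
      calc ‖φ z‖ ≤ ‖φ‖ * ‖z‖ := φ.le_opNorm z
        _ ≤ 1 := by rw [hφ1, one_mul]; exact hz1
    have hval : ‖J x q0‖ = ‖x‖ ^ (m * n) := by
      rw [hJ x q0, hq0z x, hφ2, norm_pow, norm_pow, RCLike.norm_ofReal,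
        abs_of_nonneg (norm_nonneg x), ← pow_mul, mul_comm n m]
    exact le_csSup (HPoly.bddAbove_image (J x)) ⟨q0, hq0, hval⟩
end

section
/- Let 𝕜 = ℝ or ℂ and let d ≥ 1 be an odd natural number. The map R : ℓ_d → ℓ₁ defined by R((λ_j)_{j∈ℕ}) = (λ_j^d)_{j∈ℕ} is a well-defined surjective continuous d-homogeneous polynomial; in particular ‖R(λ)‖_{ℓ₁} = ‖λ‖_{ℓ_d}^d for every λ ∈ ℓ_d. -/
open scoped NNReal ENNReal

instance : Fact ((1 : ℝ≥0∞) ≤ 1) := ⟨le_refl _⟩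

section Aux

variable {𝕜 : Type*} [RCLike 𝕜] {d : ℕ}

lemma real_odd_root (hd : Odd d) (c : ℝ) : ∃ r : ℝ, r ^ d = c := by
  have hd0 : d ≠ 0 := by rintro rfl; simp [Nat.odd_iff] at hd
  have hdR : (d : ℝ) ≠ 0 := Nat.cast_ne_zero.mpr hd0
  rcases le_or_gt 0 c with hc | hc
  · refine ⟨c ^ ((d : ℝ)⁻¹), ?_⟩
    rw [← Real.rpow_natCast (c ^ ((d : ℝ)⁻¹)) d, ← Real.rpow_mul hc,
      inv_mul_cancel₀ hdR, Real.rpow_one]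
  · obtain ⟨r, hr⟩ : ∃ r : ℝ, r ^ d = -c := by
      refine ⟨(-c) ^ ((d : ℝ)⁻¹), ?_⟩
      rw [← Real.rpow_natCast ((-c) ^ ((d : ℝ)⁻¹)) d, ← Real.rpow_mul (by linarith),
        inv_mul_cancel₀ hdR, Real.rpow_one]
    exact ⟨-r, by rw [hd.neg_pow, hr, neg_neg]⟩

lemma rclike_odd_root (hd : Odd d) (a : 𝕜) : ∃ x : 𝕜, x ^ d = a := by
  have hd0 : 0 < d := hd.pos
  rcases RCLike.I_mul_I_ax (K := 𝕜) with hI | hI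
  · have ha : ((RCLike.re a : ℝ) : 𝕜) = a := by
      conv_rhs => rw [← RCLike.re_add_im a]
      rw [hI, mul_zero, add_zero]
    obtain ⟨r, hr⟩ := real_odd_root hd (RCLike.re a)
    exact ⟨(r : 𝕜), by rw [← RCLike.ofReal_pow, hr, ha]⟩
  · let φ : ℂ →ₐ[ℝ] 𝕜 := Complex.liftAux (RCLike.I : 𝕜) hI
    have ha : φ ⟨RCLike.re a, RCLike.im a⟩ = a := by
      rw [show φ = Complex.liftAux (RCLike.I : 𝕜) hI from rfl, Complex.liftAux_apply]
      simp only [RCLike.real_smul_eq_coe_mul]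
      rw [show algebraMap ℝ 𝕜 ((⟨RCLike.re a, RCLike.im a⟩ : ℂ).re)
          = ((RCLike.re a : ℝ) : 𝕜) from rfl]
      exact RCLike.re_add_im a
    obtain ⟨w, hw⟩ := Complex.isAlgClosed.exists_pow_nat_eq
      (⟨RCLike.re a, RCLike.im a⟩ : ℂ) hd0
    exact ⟨φ w, by rw [← map_pow, hw, ha]⟩

lemma amgm (hd0 : d ≠ 0) (b : Fin d → ℝ) (hb : ∀ i, 0 ≤ b i) :
    ∏ i, b i ≤ (∑ i, b i ^ d) / d := by
  have hdR : (d : ℝ) ≠ 0 := Nat.cast_ne_zero.mpr hd0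
  have key := Real.geom_mean_le_arith_mean_weighted Finset.univ (fun _ : Fin d => (d : ℝ)⁻¹)
    (fun i => b i ^ d) (fun i _ => inv_nonneg.mpr (Nat.cast_nonneg d))
    (by simp [Finset.card_univ, mul_inv_cancel₀ hdR]) (fun i _ => pow_nonneg (hb i) d)
  have hL : ∀ i : Fin d, ((b i ^ d : ℝ) ^ ((d : ℝ)⁻¹)) = b i := fun i => by
    rw [← Real.rpow_natCast (b i) d, ← Real.rpow_mul (hb i), mul_inv_cancel₀ hdR, Real.rpow_one]
  calc ∏ i, b i = ∏ i, ((b i ^ d : ℝ) ^ ((d : ℝ)⁻¹)) := by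
        exact (Finset.prod_congr rfl fun i _ => hL i).symm
    _ ≤ ∑ i, (d : ℝ)⁻¹ * b i ^ d := key
    _ = (∑ i, b i ^ d) / d := by rw [← Finset.mul_sum]; ring

variable (𝕜) in
lemma summable_pow_norm (d : ℕ) (hd0 : d ≠ 0) [Fact (1 ≤ (d : ℝ≥0∞))]
    (f : lp (fun _ : ℕ => 𝕜) d) :
    Summable fun j => ‖(f : ∀ _ : ℕ, 𝕜) j‖ ^ d := by
  have hp : 0 < ((d : ℝ≥0∞)).toReal := by
    simp only [ENNReal.toReal_natCast]
    exact_mod_cast Nat.pos_of_ne_zero hd0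
  have := (lp.memℓp f).summable hp
  refine this.congr fun j => ?_
  rw [ENNReal.toReal_natCast, Real.rpow_natCast]

variable (𝕜) in
lemma tsum_pow_norm (d : ℕ) (hd0 : d ≠ 0) [Fact (1 ≤ (d : ℝ≥0∞))]
    (f : lp (fun _ : ℕ => 𝕜) d) :
    ∑' j, ‖(f : ∀ _ : ℕ, 𝕜) j‖ ^ d = ‖f‖ ^ d := by
  have hp : 0 < ((d : ℝ≥0∞)).toReal := by
    simp only [ENNReal.toReal_natCast]
    exact_mod_cast Nat.pos_of_ne_zero hd0
  have := (lp.norm_rpow_eq_tsum hp f).symm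
  calc ∑' j, ‖(f : ∀ _ : ℕ, 𝕜) j‖ ^ d
      = ∑' j, ‖(f : ∀ _ : ℕ, 𝕜) j‖ ^ ((d : ℝ≥0∞)).toReal := by
        refine tsum_congr fun j => ?_
        rw [ENNReal.toReal_natCast, Real.rpow_natCast]
    _ = ‖f‖ ^ ((d : ℝ≥0∞)).toReal := this
    _ = ‖f‖ ^ d := by rw [ENNReal.toReal_natCast, Real.rpow_natCast]

variable (𝕜) in
lemma summable_prod_norm (d : ℕ) (hd0 : d ≠ 0) [Fact (1 ≤ (d : ℝ≥0∞))]
    (f : Fin d → lp (fun _ : ℕ => 𝕜) d) :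
    Summable fun j => ∏ i, ‖(f i : ∀ _ : ℕ, 𝕜) j‖ := by
  refine Summable.of_nonneg_of_le (fun j => Finset.prod_nonneg fun i _ => norm_nonneg _)
    (fun j => amgm hd0 _ (fun i => norm_nonneg _)) ?_
  exact (summable_sum fun i _ => summable_pow_norm 𝕜 d hd0 (f i)).div_const _

variable (𝕜) in
lemma tsum_prod_norm_le (d : ℕ) (hd0 : d ≠ 0) [Fact (1 ≤ (d : ℝ≥0∞))]
    (f : Fin d → lp (fun _ : ℕ => 𝕜) d) :
    ∑' j, ∏ i, ‖(f i : ∀ _ : ℕ, 𝕜) j‖ ≤ ∏ i, ‖f i‖ := by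
  by_cases h : ∃ i, f i = 0
  · obtain ⟨i₀, hi₀⟩ := h
    have hz : ∀ j, ∏ i, ‖(f i : ∀ _ : ℕ, 𝕜) j‖ = 0 := fun j =>
      Finset.prod_eq_zero (Finset.mem_univ i₀) (by rw [hi₀]; simp)
    calc ∑' j, ∏ i, ‖(f i : ∀ _ : ℕ, 𝕜) j‖ = 0 := by simp [hz]
      _ ≤ ∏ i, ‖f i‖ := Finset.prod_nonneg fun i _ => norm_nonneg _
  · push_neg at h
    have hdR : (d : ℝ) ≠ 0 := Nat.cast_ne_zero.mpr hd0
    set c : Fin d → ℝ := fun i => ‖f i‖ with hc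
    have hcpos : ∀ i, 0 < c i := fun i => norm_pos_iff.mpr (h i)
    have hsum_i : ∀ i : Fin d, Summable fun j => ((c i)⁻¹ * ‖(f i : ∀ _ : ℕ, 𝕜) j‖) ^ d := by
      intro i
      simp only [mul_pow]
      exact (summable_pow_norm 𝕜 d hd0 (f i)).mul_left _
    have hsum : Summable fun j =>
        (∏ i, c i) * ((∑ i, ((c i)⁻¹ * ‖(f i : ∀ _ : ℕ, 𝕜) j‖) ^ d) / d) :=
      (((summable_sum fun i _ => hsum_i i).div_const _).mul_left _)
    have key : ∀ j, ∏ i, ‖(f i : ∀ _ : ℕ, 𝕜) j‖ ≤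
        (∏ i, c i) * ((∑ i, ((c i)⁻¹ * ‖(f i : ∀ _ : ℕ, 𝕜) j‖) ^ d) / d) := by
      intro j
      have ham := amgm hd0 (fun i => (c i)⁻¹ * ‖(f i : ∀ _ : ℕ, 𝕜) j‖)
        (fun i => by positivity)
      have expand : ∏ i, ‖(f i : ∀ _ : ℕ, 𝕜) j‖
          = (∏ i, c i) * ∏ i, (c i)⁻¹ * ‖(f i : ∀ _ : ℕ, 𝕜) j‖ := by
        rw [← Finset.prod_mul_distrib]
        refine Finset.prod_congr rfl fun i _ => ?_
        rw [← mul_assoc, mul_inv_cancel₀ (hcpos i).ne', one_mul]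
      rw [expand]
      exact mul_le_mul_of_nonneg_left ham (Finset.prod_nonneg fun i _ => (hcpos i).le)
    calc ∑' j, ∏ i, ‖(f i : ∀ _ : ℕ, 𝕜) j‖
        ≤ ∑' j, (∏ i, c i) * ((∑ i, ((c i)⁻¹ * ‖(f i : ∀ _ : ℕ, 𝕜) j‖) ^ d) / d) :=
          Summable.tsum_le_tsum key (summable_prod_norm 𝕜 d hd0 f) hsum
      _ = (∏ i, c i) * ∑' j, (∑ i, ((c i)⁻¹ * ‖(f i : ∀ _ : ℕ, 𝕜) j‖) ^ d) / d :=
          tsum_mul_left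
      _ = ∏ i, c i := by
          have h1 : ∑' j, (∑ i, ((c i)⁻¹ * ‖(f i : ∀ _ : ℕ, 𝕜) j‖) ^ d) / d
              = (∑' j, ∑ i, ((c i)⁻¹ * ‖(f i : ∀ _ : ℕ, 𝕜) j‖) ^ d) / d :=
            tsum_div_const
          have h2 : ∑' j, ∑ i, ((c i)⁻¹ * ‖(f i : ∀ _ : ℕ, 𝕜) j‖) ^ d
              = ∑ i, ∑' j, ((c i)⁻¹ * ‖(f i : ∀ _ : ℕ, 𝕜) j‖) ^ d :=
            Summable.tsum_finsetSum fun i _ => hsum_i i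
          have h3 : ∀ i : Fin d, ∑' j, ((c i)⁻¹ * ‖(f i : ∀ _ : ℕ, 𝕜) j‖) ^ d = 1 := by
            intro i
            simp only [mul_pow]
            rw [tsum_mul_left, tsum_pow_norm 𝕜 d hd0 (f i), ← mul_pow,
              inv_mul_cancel₀ (hcpos i).ne', one_pow]
          rw [h1, h2, Finset.sum_congr rfl fun i _ => h3 i, Finset.sum_const,
            Finset.card_univ, Fintype.card_fin, nsmul_eq_mul, mul_one, div_self hdR, mul_one]

variable (𝕜) in
/-- Evaluation at a coordinate as a linear map. -/
noncomputable def evalL (p : ℝ≥0∞) [Fact (1 ≤ p)] (j : ℕ) :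
    lp (fun _ : ℕ => 𝕜) p →ₗ[𝕜] 𝕜 where
  toFun f := f j
  map_add' _ _ := rfl
  map_smul' _ _ := rfl

variable (𝕜) in
/-- The coordinatewise-product multilinear map, valued in `ℕ → 𝕜`. -/
noncomputable def prodML (d : ℕ) [Fact (1 ≤ (d : ℝ≥0∞))] :
    MultilinearMap 𝕜 (fun _ : Fin d => lp (fun _ : ℕ => 𝕜) d) (∀ _ : ℕ, 𝕜) :=
  MultilinearMap.pi fun j =>
    (MultilinearMap.mkPiAlgebra 𝕜 (Fin d) 𝕜).compLinearMap fun _ => evalL 𝕜 d j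

lemma prodML_apply (d : ℕ) [Fact (1 ≤ (d : ℝ≥0∞))]
    (f : Fin d → lp (fun _ : ℕ => 𝕜) d) (j : ℕ) :
    prodML 𝕜 d f j = ∏ i, (f i : ∀ _ : ℕ, 𝕜) j := by
  simp [prodML, evalL]; rfl

lemma memℓp_prodML (d : ℕ) (hd0 : d ≠ 0) [Fact (1 ≤ (d : ℝ≥0∞))]
    (f : Fin d → lp (fun _ : ℕ => 𝕜) d) :
    Memℓp (prodML 𝕜 d f) 1 := by
  apply memℓp_gen
  have h1 : (1 : ℝ≥0∞).toReal = 1 := rfl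
  refine (summable_prod_norm 𝕜 d hd0 f).congr fun j => ?_
  rw [h1, Real.rpow_one, prodML_apply, norm_prod]

variable (𝕜) in
/-- The coordinatewise-product multilinear map, valued in `ℓ¹`. -/
noncomputable def prodMLlp (d : ℕ) (hd0 : d ≠ 0) [Fact (1 ≤ (d : ℝ≥0∞))] :
    MultilinearMap 𝕜 (fun _ : Fin d => lp (fun _ : ℕ => 𝕜) d) (lp (fun _ : ℕ => 𝕜) 1) where
  toFun f := ⟨prodML 𝕜 d f, memℓp_prodML d hd0 f⟩
  map_update_add' f k x y := Subtype.ext ((prodML 𝕜 d).map_update_add f k x y)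
  map_update_smul' f k c x := Subtype.ext ((prodML 𝕜 d).map_update_smul f k c x)

lemma prodMLlp_apply (d : ℕ) (hd0 : d ≠ 0) [Fact (1 ≤ (d : ℝ≥0∞))]
    (f : Fin d → lp (fun _ : ℕ => 𝕜) d) (j : ℕ) :
    (prodMLlp 𝕜 d hd0 f : ∀ _ : ℕ, 𝕜) j = ∏ i, (f i : ∀ _ : ℕ, 𝕜) j :=
  prodML_apply d f j

lemma norm_lp_one (g : lp (fun _ : ℕ => 𝕜) 1) : ‖g‖ = ∑' j, ‖(g : ∀ _ : ℕ, 𝕜) j‖ := by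
  have h1 : (0 : ℝ) < (1 : ℝ≥0∞).toReal := by norm_num
  rw [lp.norm_eq_tsum_rpow h1 g]
  simp [Real.rpow_one]

lemma prodMLlp_bound (d : ℕ) (hd0 : d ≠ 0) [Fact (1 ≤ (d : ℝ≥0∞))]
    (f : Fin d → lp (fun _ : ℕ => 𝕜) d) :
    ‖prodMLlp 𝕜 d hd0 f‖ ≤ 1 * ∏ i, ‖f i‖ := by
  rw [one_mul, norm_lp_one]
  calc ∑' j, ‖(prodMLlp 𝕜 d hd0 f : ∀ _ : ℕ, 𝕜) j‖
      = ∑' j, ∏ i, ‖(f i : ∀ _ : ℕ, 𝕜) j‖ := by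
        refine tsum_congr fun j => ?_
        rw [prodMLlp_apply, norm_prod]
    _ ≤ ∏ i, ‖f i‖ := tsum_prod_norm_le 𝕜 d hd0 f

end Aux

/-- For odd `d ≥ 1`, the map `R : ℓ_d → ℓ₁`, `R (λ_j)_j = (λ_j^d)_j`, is a
well-defined surjective continuous `d`-homogeneous polynomial with `‖R λ‖ = ‖λ‖^d`. -/
theorem statement16 (𝕜 : Type*) [RCLike 𝕜] (d : ℕ) (hd : Odd d) (hd1 : 1 ≤ d)
    [Fact (1 ≤ (d : ℝ≥0∞))] :
    ∃ R : lp (fun _ : ℕ => 𝕜) d → lp (fun _ : ℕ => 𝕜) 1,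
      (∀ (f : lp (fun _ : ℕ => 𝕜) d) (j : ℕ), (R f : ∀ _ : ℕ, 𝕜) j = (f : ∀ _ : ℕ, 𝕜) j ^ d) ∧
      Function.Surjective R ∧
      IsHomPoly 𝕜 d R ∧
      ∀ f : lp (fun _ : ℕ => 𝕜) d, ‖R f‖ = ‖f‖ ^ d := by
  have hd0 : d ≠ 0 := by omega
  set A : ContinuousMultilinearMap 𝕜 (fun _ : Fin d => lp (fun _ : ℕ => 𝕜) d)
      (lp (fun _ : ℕ => 𝕜) 1) :=
    (prodMLlp 𝕜 d hd0).mkContinuous 1 (prodMLlp_bound d hd0) with hA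
  refine ⟨fun f => A (fun _ => f), ?_, ?_, ⟨A, fun _ => rfl⟩, ?_⟩
  · intro f j
    have : (A (fun _ => f) : ∀ _ : ℕ, 𝕜) j = ∏ _i : Fin d, (f : ∀ _ : ℕ, 𝕜) j :=
      prodMLlp_apply d hd0 (fun _ => f) j
    rw [this, Finset.prod_const, Finset.card_univ, Fintype.card_fin]
  · -- surjectivity
    intro g
    have hx : ∀ j : ℕ, ∃ x : 𝕜, x ^ d = (g : ∀ _ : ℕ, 𝕜) j := fun j =>
      rclike_odd_root hd _
    choose x hxg using hx
    have hmem : Memℓp x (d : ℝ≥0∞) := by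
      apply memℓp_gen
      have hg := (lp.memℓp g).summable (p := (1 : ℝ≥0∞)) (by norm_num)
      refine hg.congr fun j => ?_
      have : ‖x j‖ ^ d = ‖(g : ∀ _ : ℕ, 𝕜) j‖ := by
        rw [← norm_pow, hxg j]
      rw [ENNReal.toReal_one, Real.rpow_one, ENNReal.toReal_natCast, Real.rpow_natCast, this]
    refine ⟨⟨x, hmem⟩, ?_⟩
    apply lp.ext
    funext j
    have : (A (fun _ => (⟨x, hmem⟩ : lp (fun _ : ℕ => 𝕜) d)) : ∀ _ : ℕ, 𝕜) j
        = ∏ _i : Fin d, x j := prodMLlp_apply d hd0 _ j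
    rw [this, Finset.prod_const, Finset.card_univ, Fintype.card_fin, hxg]
  · -- norm identity
    intro f
    rw [norm_lp_one]
    calc ∑' j, ‖(A (fun _ => f) : ∀ _ : ℕ, 𝕜) j‖
        = ∑' j, ‖(f : ∀ _ : ℕ, 𝕜) j‖ ^ d := by
          refine tsum_congr fun j => ?_
          have : (A (fun _ => f) : ∀ _ : ℕ, 𝕜) j = ∏ _i : Fin d, (f : ∀ _ : ℕ, 𝕜) j :=
            prodMLlp_apply d hd0 (fun _ => f) j
          rw [this, Finset.prod_const, Finset.card_univ, Fintype.card_fin, norm_pow]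
      _ = ‖f‖ ^ d := tsum_pow_norm 𝕜 d hd0 f
end
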